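/- arXiv:2112.14962 — 2 statements merged into one kernel-verified Lean document; each statement's English description precedes it below -/
import Mathlib

section
/- For any two formulas F and F′, the translations ⟦F⟧ and ⟦F′⟧ are isomorphic as labeled mixed graphs if and only if F and F′ are equivalent modulo associativity and commutativity of ⊗ and of ⅋. -/
/-! # Formulas of multiplicative exponential linear logic with the placeholder `∘` -/

inductive Formula where
  | atom  : ℕ → Formula
  | natom : ℕ → Formula
  | parr  : Formula → Formula → Formula
  | tens  : Formula → Formula → Formula
  | bang  : Formula → Formula
  | quest : Formula → Formula
  | bot   : Formula
  | one   : Formula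
  | hole  : Formula
  deriving DecidableEq

namespace Formula

/-- A MELL-formula: a formula with no occurrence of the placeholder `∘`. -/
def isMELL : Formula → Prop
  | atom _   => True
  | natom _  => True
  | parr A B => isMELL A ∧ isMELL B
  | tens A B => isMELL A ∧ isMELL B
  | bang A   => isMELL A
  | quest A  => isMELL A
  | bot      => True
  | one      => True
  | hole     => False

/-- A formula without modalities (no `!` and no `?`). -/
def noMod : Formula → Prop
  | atom _   => True
  | natom _  => True
  | parr A B => noMod A ∧ noMod B
  | tens A B => noMod A ∧ noMod B
  | bang _   => False
  | quest _  => False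
  | bot      => True
  | one      => True
  | hole     => True

/-- A formula of multiplicative linear logic with units:
built from atoms, dual atoms, `⊗`, `⅋`, `1`, `⊥`; no `∘`, `!`, `?`. -/
def isMLLu : Formula → Prop
  | atom _   => True
  | natom _  => True
  | parr A B => isMLLu A ∧ isMLLu B
  | tens A B => isMLLu A ∧ isMLLu B
  | bang _   => False
  | quest _  => False
  | bot      => True
  | one      => True
  | hole     => False

/-- Linear negation, defined through the De Morgan laws. -/
def dual : Formula → Formula
  | atom a   => natom a
  | natom a  => atom a
  | parr A B => tens (dual A) (dual B)
  | tens A B => parr (dual A) (dual B)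
  | bang A   => quest (dual A)
  | quest A  => bang (dual A)
  | bot      => one
  | one      => bot
  | hole     => hole

/-- `questN n F` is `?ⁿ F`. -/
def questN : ℕ → Formula → Formula
  | 0,     A => A
  | n + 1, A => quest (questN n A)

/-- A weaken-contradiction: a formula `?ⁿ(A ⊗ Ā)` with `A` a MELL-formula. -/
def isWeakenContradiction (C : Formula) : Prop :=
  ∃ (n : ℕ) (A : Formula), A.isMELL ∧ C = questN n (tens A (dual A))

end Formula

/-- A sequent is a (non-empty) multiset of formulas. -/
abbrev Sequent := Multiset Formula

/-! ## Sequent systems -/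

/-- The system MLL = {ax, ⊗, ⅋} (it coincides with the linear system MLLˡ). -/
inductive ProvMLL : Sequent → Prop
  | ax (a : ℕ) : ProvMLL {Formula.atom a, Formula.natom a}
  | parr (Γ : Sequent) (A B : Formula) :
      ProvMLL (A ::ₘ B ::ₘ Γ) → ProvMLL (Formula.parr A B ::ₘ Γ)
  | tens (Γ Δ : Sequent) (A B : Formula) :
      ProvMLL (A ::ₘ Γ) → ProvMLL (B ::ₘ Δ) →
      ProvMLL (Formula.tens A B ::ₘ (Γ + Δ))

/-- The system MLLu = {ax, ⊗, ⅋, ⊥, 1}. -/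
inductive ProvMLLu : Sequent → Prop
  | ax (a : ℕ) : ProvMLLu {Formula.atom a, Formula.natom a}
  | parr (Γ : Sequent) (A B : Formula) :
      ProvMLLu (A ::ₘ B ::ₘ Γ) → ProvMLLu (Formula.parr A B ::ₘ Γ)
  | tens (Γ Δ : Sequent) (A B : Formula) :
      ProvMLLu (A ::ₘ Γ) → ProvMLLu (B ::ₘ Δ) →
      ProvMLLu (Formula.tens A B ::ₘ (Γ + Δ))
  | bot (Γ : Sequent) : ProvMLLu Γ → ProvMLLu (Formula.bot ::ₘ Γ)
  | one : ProvMLLu {Formula.one}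

/-- The system MELL = {ax, ⊗, ⅋, ⊥, 1, !p, der, w?, c?}. -/
inductive ProvMELL : Sequent → Prop
  | ax (a : ℕ) : ProvMELL {Formula.atom a, Formula.natom a}
  | parr (Γ : Sequent) (A B : Formula) :
      ProvMELL (A ::ₘ B ::ₘ Γ) → ProvMELL (Formula.parr A B ::ₘ Γ)
  | tens (Γ Δ : Sequent) (A B : Formula) :
      ProvMELL (A ::ₘ Γ) → ProvMELL (B ::ₘ Δ) →
      ProvMELL (Formula.tens A B ::ₘ (Γ + Δ))
  | bot (Γ : Sequent) : ProvMELL Γ → ProvMELL (Formula.bot ::ₘ Γ)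
  | one : ProvMELL {Formula.one}
  | prom (Γ : Sequent) (A : Formula) :
      ProvMELL (A ::ₘ Γ.map Formula.quest) →
      ProvMELL (Formula.bang A ::ₘ Γ.map Formula.quest)
  | der (Γ : Sequent) (A : Formula) :
      ProvMELL (A ::ₘ Γ) → ProvMELL (Formula.quest A ::ₘ Γ)
  | weak (Γ : Sequent) (A : Formula) :
      ProvMELL Γ → ProvMELL (Formula.quest A ::ₘ Γ)
  | contr (Γ : Sequent) (A : Formula) :
      ProvMELL (Formula.quest A ::ₘ Formula.quest A ::ₘ Γ) →
      ProvMELL (Formula.quest A ::ₘ Γ)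

/-- The system MLLu^j = {ax_j, 1_j, ⊥^j, ⅋, ⊗}. -/
inductive ProvMLLuj : Sequent → Prop
  | axj (a n : ℕ) :
      ProvMLLuj (Formula.atom a ::ₘ Formula.natom a ::ₘ Multiset.replicate n Formula.hole)
  | onej (n : ℕ) : ProvMLLuj (Formula.one ::ₘ Multiset.replicate n Formula.hole)
  | botj (Γ : Sequent) :
      ProvMLLuj (Formula.hole ::ₘ Γ) → ProvMLLuj (Formula.bot ::ₘ Γ)
  | parr (Γ : Sequent) (A B : Formula) :
      ProvMLLuj (A ::ₘ B ::ₘ Γ) → ProvMLLuj (Formula.parr A B ::ₘ Γ)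
  | tens (Γ Δ : Sequent) (A B : Formula) :
      ProvMLLuj (A ::ₘ Γ) → ProvMLLuj (B ::ₘ Δ) →
      ProvMLLuj (Formula.tens A B ::ₘ (Γ + Δ))

/-- The system MELL^j = {ax_j, 1_j, ⊥^j, w^j, ⅋, ⊗, w!p, der, dig?, dig∘, c?}. -/
inductive ProvMELLj : Sequent → Prop
  | axj (a n : ℕ) :
      ProvMELLj (Formula.atom a ::ₘ Formula.natom a ::ₘ Multiset.replicate n Formula.hole)
  | onej (n : ℕ) : ProvMELLj (Formula.one ::ₘ Multiset.replicate n Formula.hole)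
  | botj (Γ : Sequent) :
      ProvMELLj (Formula.hole ::ₘ Γ) → ProvMELLj (Formula.bot ::ₘ Γ)
  | wj (Γ : Sequent) (A : Formula) :
      ProvMELLj (Formula.hole ::ₘ Γ) → ProvMELLj (Formula.quest A ::ₘ Γ)
  | parr (Γ : Sequent) (A B : Formula) :
      ProvMELLj (A ::ₘ B ::ₘ Γ) → ProvMELLj (Formula.parr A B ::ₘ Γ)
  | tens (Γ Δ : Sequent) (A B : Formula) :
      ProvMELLj (A ::ₘ Γ) → ProvMELLj (B ::ₘ Δ) →
      ProvMELLj (Formula.tens A B ::ₘ (Γ + Δ))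
  | wprom (Γ : Sequent) (A : Formula) :
      ProvMELLj (A ::ₘ Γ) → ProvMELLj (Formula.bang A ::ₘ Γ.map Formula.quest)
  | der (Γ : Sequent) (A : Formula) :
      ProvMELLj (A ::ₘ Γ) → ProvMELLj (Formula.quest A ::ₘ Γ)
  | dig (Γ : Sequent) (A : Formula) :
      ProvMELLj (Formula.quest (Formula.quest A) ::ₘ Γ) →
      ProvMELLj (Formula.quest A ::ₘ Γ)
  | digo (Γ : Sequent) :
      ProvMELLj (Formula.quest Formula.hole ::ₘ Γ) → ProvMELLj (Formula.hole ::ₘ Γ)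
  | contr (Γ : Sequent) (A : Formula) :
      ProvMELLj (Formula.quest A ::ₘ Formula.quest A ::ₘ Γ) →
      ProvMELLj (Formula.quest A ::ₘ Γ)

/-- The system MELL^j extended with the cut rule (cut formulas are MELL-formulas). -/
inductive ProvMELLjCut : Sequent → Prop
  | axj (a n : ℕ) :
      ProvMELLjCut (Formula.atom a ::ₘ Formula.natom a ::ₘ Multiset.replicate n Formula.hole)
  | onej (n : ℕ) : ProvMELLjCut (Formula.one ::ₘ Multiset.replicate n Formula.hole)
  | botj (Γ : Sequent) :
      ProvMELLjCut (Formula.hole ::ₘ Γ) → ProvMELLjCut (Formula.bot ::ₘ Γ)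
  | wj (Γ : Sequent) (A : Formula) :
      ProvMELLjCut (Formula.hole ::ₘ Γ) → ProvMELLjCut (Formula.quest A ::ₘ Γ)
  | parr (Γ : Sequent) (A B : Formula) :
      ProvMELLjCut (A ::ₘ B ::ₘ Γ) → ProvMELLjCut (Formula.parr A B ::ₘ Γ)
  | tens (Γ Δ : Sequent) (A B : Formula) :
      ProvMELLjCut (A ::ₘ Γ) → ProvMELLjCut (B ::ₘ Δ) →
      ProvMELLjCut (Formula.tens A B ::ₘ (Γ + Δ))
  | wprom (Γ : Sequent) (A : Formula) :
      ProvMELLjCut (A ::ₘ Γ) → ProvMELLjCut (Formula.bang A ::ₘ Γ.map Formula.quest)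
  | der (Γ : Sequent) (A : Formula) :
      ProvMELLjCut (A ::ₘ Γ) → ProvMELLjCut (Formula.quest A ::ₘ Γ)
  | dig (Γ : Sequent) (A : Formula) :
      ProvMELLjCut (Formula.quest (Formula.quest A) ::ₘ Γ) →
      ProvMELLjCut (Formula.quest A ::ₘ Γ)
  | digo (Γ : Sequent) :
      ProvMELLjCut (Formula.quest Formula.hole ::ₘ Γ) → ProvMELLjCut (Formula.hole ::ₘ Γ)
  | contr (Γ : Sequent) (A : Formula) :
      ProvMELLjCut (Formula.quest A ::ₘ Formula.quest A ::ₘ Γ) →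
      ProvMELLjCut (Formula.quest A ::ₘ Γ)
  | cut (Γ Δ : Sequent) (A : Formula) :
      A.isMELL → ProvMELLjCut (A ::ₘ Γ) → ProvMELLjCut (A.dual ::ₘ Δ) →
      ProvMELLjCut (Γ + Δ)

/-- The linear system MLLu^ℓ = {ax_j, 1_j, ⅋, ⊗}. -/
inductive ProvMLLuLin : Sequent → Prop
  | axj (a n : ℕ) :
      ProvMLLuLin (Formula.atom a ::ₘ Formula.natom a ::ₘ Multiset.replicate n Formula.hole)
  | onej (n : ℕ) : ProvMLLuLin (Formula.one ::ₘ Multiset.replicate n Formula.hole)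
  | parr (Γ : Sequent) (A B : Formula) :
      ProvMLLuLin (A ::ₘ B ::ₘ Γ) → ProvMLLuLin (Formula.parr A B ::ₘ Γ)
  | tens (Γ Δ : Sequent) (A B : Formula) :
      ProvMLLuLin (A ::ₘ Γ) → ProvMLLuLin (B ::ₘ Δ) →
      ProvMLLuLin (Formula.tens A B ::ₘ (Γ + Δ))

/-- The linear system MELL^ℓ = {ax_j, 1_j, ⅋, ⊗, w!p}. -/
inductive ProvMELLLin : Sequent → Prop
  | axj (a n : ℕ) :
      ProvMELLLin (Formula.atom a ::ₘ Formula.natom a ::ₘ Multiset.replicate n Formula.hole)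
  | onej (n : ℕ) : ProvMELLLin (Formula.one ::ₘ Multiset.replicate n Formula.hole)
  | parr (Γ : Sequent) (A B : Formula) :
      ProvMELLLin (A ::ₘ B ::ₘ Γ) → ProvMELLLin (Formula.parr A B ::ₘ Γ)
  | tens (Γ Δ : Sequent) (A B : Formula) :
      ProvMELLLin (A ::ₘ Γ) → ProvMELLLin (B ::ₘ Δ) →
      ProvMELLLin (Formula.tens A B ::ₘ (Γ + Δ))
  | wprom (Γ : Sequent) (A : Formula) :
      ProvMELLLin (A ::ₘ Γ) → ProvMELLLin (Formula.bang A ::ₘ Γ.map Formula.quest)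

/-- MELL with the cut rule, recording the list of active cut formulas of the derivation. -/
inductive ProvMELLCutL : Sequent → List Formula → Prop
  | ax (a : ℕ) : ProvMELLCutL {Formula.atom a, Formula.natom a} []
  | parr (Γ : Sequent) (A B : Formula) (L : List Formula) :
      ProvMELLCutL (A ::ₘ B ::ₘ Γ) L → ProvMELLCutL (Formula.parr A B ::ₘ Γ) L
  | tens (Γ Δ : Sequent) (A B : Formula) (L₁ L₂ : List Formula) :
      ProvMELLCutL (A ::ₘ Γ) L₁ → ProvMELLCutL (B ::ₘ Δ) L₂ →
      ProvMELLCutL (Formula.tens A B ::ₘ (Γ + Δ)) (L₁ ++ L₂)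
  | bot (Γ : Sequent) (L : List Formula) :
      ProvMELLCutL Γ L → ProvMELLCutL (Formula.bot ::ₘ Γ) L
  | one : ProvMELLCutL {Formula.one} []
  | prom (Γ : Sequent) (A : Formula) (L : List Formula) :
      ProvMELLCutL (A ::ₘ Γ.map Formula.quest) L →
      ProvMELLCutL (Formula.bang A ::ₘ Γ.map Formula.quest) L
  | der (Γ : Sequent) (A : Formula) (L : List Formula) :
      ProvMELLCutL (A ::ₘ Γ) L → ProvMELLCutL (Formula.quest A ::ₘ Γ) L
  | weak (Γ : Sequent) (A : Formula) (L : List Formula) :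
      ProvMELLCutL Γ L → ProvMELLCutL (Formula.quest A ::ₘ Γ) L
  | contr (Γ : Sequent) (A : Formula) (L : List Formula) :
      ProvMELLCutL (Formula.quest A ::ₘ Formula.quest A ::ₘ Γ) L →
      ProvMELLCutL (Formula.quest A ::ₘ Γ) L
  | cut (Γ Δ : Sequent) (A : Formula) (L₁ L₂ : List Formula) :
      A.isMELL → ProvMELLCutL (A ::ₘ Γ) L₁ → ProvMELLCutL (A.dual ::ₘ Δ) L₂ →
      ProvMELLCutL (Γ + Δ) (A :: (L₁ ++ L₂))

/-! ## Deep inference rewriting -/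

/-- Closure of a rewrite relation under arbitrary formula contexts. -/
inductive Deep (r : Formula → Formula → Prop) : Formula → Formula → Prop
  | base {A B : Formula} : r A B → Deep r A B
  | parrL {A A' : Formula} (B : Formula) :
      Deep r A A' → Deep r (Formula.parr A B) (Formula.parr A' B)
  | parrR (A : Formula) {B B' : Formula} :
      Deep r B B' → Deep r (Formula.parr A B) (Formula.parr A B')
  | tensL {A A' : Formula} (B : Formula) :
      Deep r A A' → Deep r (Formula.tens A B) (Formula.tens A' B)
  | tensR (A : Formula) {B B' : Formula} :
      Deep r B B' → Deep r (Formula.tens A B) (Formula.tens A B')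
  | bang {A A' : Formula} : Deep r A A' → Deep r (Formula.bang A) (Formula.bang A')
  | quest {A A' : Formula} : Deep r A A' → Deep r (Formula.quest A) (Formula.quest A')

/-- Base steps of all the deep-MELL rules:
deep dereliction, deep digging, deep ∘-digging, deep ⊥, deep weakening, deep contraction. -/
inductive DeepMELLBase : Formula → Formula → Prop
  | der (A : Formula) : DeepMELLBase A (Formula.quest A)
  | dig (A : Formula) :
      DeepMELLBase (Formula.quest (Formula.quest A)) (Formula.quest A)
  | digHole : DeepMELLBase (Formula.quest Formula.hole) Formula.hole
  | bot : DeepMELLBase Formula.hole Formula.bot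
  | weak (A : Formula) : DeepMELLBase Formula.hole (Formula.quest A)
  | contr (A : Formula) :
      DeepMELLBase (Formula.parr (Formula.quest A) (Formula.quest A)) (Formula.quest A)

/-- Base steps of deep dereliction, deep digging and deep ∘-digging. -/
inductive DigBase : Formula → Formula → Prop
  | der (A : Formula) : DigBase A (Formula.quest A)
  | dig (A : Formula) : DigBase (Formula.quest (Formula.quest A)) (Formula.quest A)
  | digHole : DigBase (Formula.quest Formula.hole) Formula.hole

/-- Base steps of deep weakening and deep ⊥. -/
inductive WeakBase : Formula → Formula → Prop
  | bot : WeakBase Formula.hole Formula.bot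
  | weak (A : Formula) : WeakBase Formula.hole (Formula.quest A)

/-- Base step of deep contraction. -/
inductive ContrBase : Formula → Formula → Prop
  | contr (A : Formula) :
      ContrBase (Formula.parr (Formula.quest A) (Formula.quest A)) (Formula.quest A)

/-- Base steps of deep ⊥, deep weakening, deep ?-contraction, deep ∘-contraction,
and the deep associativity-commutativity rules. -/
inductive WCACBase : Formula → Formula → Prop
  | bot : WCACBase Formula.hole Formula.bot
  | weak (A : Formula) : WCACBase Formula.hole (Formula.quest A)
  | contr (A : Formula) :
      WCACBase (Formula.parr (Formula.quest A) (Formula.quest A)) (Formula.quest A)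
  | contrHole :
      WCACBase (Formula.parr Formula.hole Formula.hole) Formula.hole
  | tensAssoc (A B C : Formula) :
      WCACBase (Formula.tens (Formula.tens A B) C) (Formula.tens A (Formula.tens B C))
  | parrAssoc (A B C : Formula) :
      WCACBase (Formula.parr (Formula.parr A B) C) (Formula.parr A (Formula.parr B C))
  | tensComm (A B : Formula) : WCACBase (Formula.tens A B) (Formula.tens B A)
  | parrComm (A B : Formula) : WCACBase (Formula.parr A B) (Formula.parr B A)

/-- One deep rewriting step inside a sequent: rewrite one member of the multiset. -/
def SeqStep (r : Formula → Formula → Prop) (Γ Γ' : Sequent) : Prop :=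
  ∃ (A A' : Formula) (Δ : Sequent), Deep r A A' ∧ Γ = A ::ₘ Δ ∧ Γ' = A' ::ₘ Δ

/-- Derivability between sequents by a finite sequence of deep rewriting steps. -/
def SeqDeriv (r : Formula → Formula → Prop) : Sequent → Sequent → Prop :=
  Relation.ReflTransGen (SeqStep r)

/-- Derivability between formulas by a finite sequence of deep rewriting steps. -/
def FormDeriv (r : Formula → Formula → Prop) : Formula → Formula → Prop :=
  Relation.ReflTransGen (Deep r)

/-- Equivalence of formulas modulo associativity and commutativity of ⊗ and ⅋. -/
inductive ACEq : Formula → Formula → Prop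
  | refl (A : Formula) : ACEq A A
  | symm {A B : Formula} : ACEq A B → ACEq B A
  | trans {A B C : Formula} : ACEq A B → ACEq B C → ACEq A C
  | tensAssoc (A B C : Formula) :
      ACEq (Formula.tens (Formula.tens A B) C) (Formula.tens A (Formula.tens B C))
  | parrAssoc (A B C : Formula) :
      ACEq (Formula.parr (Formula.parr A B) C) (Formula.parr A (Formula.parr B C))
  | tensComm (A B : Formula) : ACEq (Formula.tens A B) (Formula.tens B A)
  | parrComm (A B : Formula) : ACEq (Formula.parr A B) (Formula.parr B A)
  | tensCongr {A A' B B' : Formula} :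
      ACEq A A' → ACEq B B' → ACEq (Formula.tens A B) (Formula.tens A' B')
  | parrCongr {A A' B B' : Formula} :
      ACEq A A' → ACEq B B' → ACEq (Formula.parr A B) (Formula.parr A' B')
  | bangCongr {A A' : Formula} : ACEq A A' → ACEq (Formula.bang A) (Formula.bang A')
  | questCongr {A A' : Formula} : ACEq A A' → ACEq (Formula.quest A) (Formula.quest A')

/-! ## Mixed graphs and relation webs -/

/-- A mixed graph: a finite set of vertices from `ℕ`, an undirected edge relation `R`
and a directed edge relation `lt`. -/
structure MGraph where
  verts : Finset ℕ
  R : ℕ → ℕ → Prop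
  lt : ℕ → ℕ → Prop

namespace MGraph

/-- The axioms of mixed graphs: `R` symmetric and irreflexive, `lt` irreflexive,
`R ∩ lt = ∅`, and all edges between vertices. -/
def IsMixed (G : MGraph) : Prop :=
  (∀ u v, G.R u v → G.R v u) ∧
  (∀ v, ¬ G.R v v) ∧
  (∀ v, ¬ G.lt v v) ∧
  (∀ u v, ¬ (G.R u v ∧ G.lt u v)) ∧
  (∀ u v, G.R u v → u ∈ G.verts ∧ v ∈ G.verts) ∧
  (∀ u v, G.lt u v → u ∈ G.verts ∧ v ∈ G.verts)

/-- `u` and `v` are joined by no edge at all. -/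
def noEdge (G : MGraph) (u v : ℕ) : Prop :=
  ¬ G.R u v ∧ ¬ G.R v u ∧ ¬ G.lt u v ∧ ¬ G.lt v u

/-- A relation web: a non-empty mixed graph with `lt` transitive, `(V,R)` a cograph
(no induced P₄), `(V,lt)` a series-parallel order (no induced N), and no induced
3-color triangle. -/
def IsRelWeb (G : MGraph) : Prop :=
  G.IsMixed ∧ G.verts.Nonempty ∧
  (∀ u v w, G.lt u v → G.lt v w → G.lt u w) ∧
  (¬ ∃ w x y z, w ∈ G.verts ∧ x ∈ G.verts ∧ y ∈ G.verts ∧ z ∈ G.verts ∧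
      w ≠ x ∧ w ≠ y ∧ w ≠ z ∧ x ≠ y ∧ x ≠ z ∧ y ≠ z ∧
      G.R w x ∧ G.R x y ∧ G.R y z ∧ ¬ G.R w y ∧ ¬ G.R w z ∧ ¬ G.R x z) ∧
  (¬ ∃ u v y z, u ∈ G.verts ∧ v ∈ G.verts ∧ y ∈ G.verts ∧ z ∈ G.verts ∧
      u ≠ v ∧ u ≠ y ∧ u ≠ z ∧ v ≠ y ∧ v ≠ z ∧ y ≠ z ∧
      G.lt u v ∧ G.lt y v ∧ G.lt y z ∧
      ¬ G.lt u y ∧ ¬ G.lt y u ∧ ¬ G.lt u z ∧ ¬ G.lt z u ∧ ¬ G.lt v z ∧ ¬ G.lt z v) ∧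
  (¬ ∃ u w v, u ∈ G.verts ∧ w ∈ G.verts ∧ v ∈ G.verts ∧
      u ≠ w ∧ u ≠ v ∧ w ≠ v ∧
      G.noEdge u w ∧ G.R w v ∧ (G.lt u v ∨ G.lt v u))

/-- `G ⅋ H`: disjoint union. -/
def uparr (G H : MGraph) : MGraph where
  verts := G.verts ∪ H.verts
  R := fun u v => G.R u v ∨ H.R u v
  lt := fun u v => G.lt u v ∨ H.lt u v

/-- `G ⊗ H`: disjoint union plus all undirected edges between `G` and `H`. -/
def utens (G H : MGraph) : MGraph where
  verts := G.verts ∪ H.verts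
  R := fun u v => G.R u v ∨ H.R u v ∨
    (u ∈ G.verts ∧ v ∈ H.verts) ∨ (u ∈ H.verts ∧ v ∈ G.verts)
  lt := fun u v => G.lt u v ∨ H.lt u v

/-- `G ◁ H`: disjoint union plus all directed edges from `G` to `H`. -/
def useq (G H : MGraph) : MGraph where
  verts := G.verts ∪ H.verts
  R := fun u v => G.R u v ∨ H.R u v
  lt := fun u v => G.lt u v ∨ H.lt u v ∨ (u ∈ G.verts ∧ v ∈ H.verts)

/-- Graphs constructible from single vertices using `⅋`, `◁` and `⊗`
(applied to disjoint graphs). -/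
inductive Constructible : MGraph → Prop
  | single (n : ℕ) :
      Constructible ⟨{n}, fun _ _ => False, fun _ _ => False⟩
  | parr {G H : MGraph} : Constructible G → Constructible H →
      Disjoint G.verts H.verts → Constructible (uparr G H)
  | tens {G H : MGraph} : Constructible G → Constructible H →
      Disjoint G.verts H.verts → Constructible (utens G H)
  | seq {G H : MGraph} : Constructible G → Constructible H →
      Disjoint G.verts H.verts → Constructible (useq G H)

end MGraph

/-! ## Labeled graphs and the translation of formulas -/

/-- Vertex labels: atoms, dual atoms, `!`, `?`, `1`, `⊥`, `∘`. -/
inductive GLabel where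
  | atom  : ℕ → GLabel
  | natom : ℕ → GLabel
  | bang  : GLabel
  | quest : GLabel
  | one   : GLabel
  | bot   : GLabel
  | hole  : GLabel
  deriving DecidableEq

/-- Atomic labels (atoms or dual atoms). -/
def GLabel.isAtom : GLabel → Prop
  | .atom _  => True
  | .natom _ => True
  | _        => False

/-- A labeled mixed graph. -/
structure LabGraph extends MGraph where
  lab : ℕ → GLabel

namespace LabGraph

/-- A labeled graph is a relation web when its underlying mixed graph is. -/
def IsWeb (G : LabGraph) : Prop := G.toMGraph.IsRelWeb

/-- Properly labeled: a vertex has an outgoing `lt`-edge iff its label is `!` or `?`. -/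
def ProperlyLabeled (G : LabGraph) : Prop :=
  ∀ v ∈ G.verts, (∃ w, G.lt v w) ↔ (G.lab v = GLabel.bang ∨ G.lab v = GLabel.quest)

/-- Modal: properly labeled, and vertices with `lt`-edges to a common target are
`lt`-comparable. -/
def IsModalLab (G : LabGraph) : Prop :=
  G.ProperlyLabeled ∧
  ∀ u v w, u ∈ G.verts → v ∈ G.verts → w ∈ G.verts →
    G.lt u w → G.lt v w → u ≠ v → (G.lt u v ∨ G.lt v u)

/-- A (labeled) modal relation web. -/
def IsModalWeb (G : LabGraph) : Prop := G.IsWeb ∧ G.IsModalLab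

/-- The single-vertex labeled graph. -/
def point (l : GLabel) : LabGraph where
  verts := {0}
  R := fun _ _ => False
  lt := fun _ _ => False
  lab := fun _ => l

/-- `G ⅋ H` on labeled graphs, with vertices renamed evenly/oddly so as to be disjoint. -/
def gparr (G H : LabGraph) : LabGraph where
  verts := G.verts.image (fun n => 2 * n) ∪ H.verts.image (fun n => 2 * n + 1)
  R := fun u v =>
    (u % 2 = 0 ∧ v % 2 = 0 ∧ G.R (u / 2) (v / 2)) ∨
    (u % 2 = 1 ∧ v % 2 = 1 ∧ H.R (u / 2) (v / 2))
  lt := fun u v =>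
    (u % 2 = 0 ∧ v % 2 = 0 ∧ G.lt (u / 2) (v / 2)) ∨
    (u % 2 = 1 ∧ v % 2 = 1 ∧ H.lt (u / 2) (v / 2))
  lab := fun n => if n % 2 = 0 then G.lab (n / 2) else H.lab (n / 2)

/-- `G ⊗ H` on labeled graphs. -/
def gtens (G H : LabGraph) : LabGraph where
  verts := (gparr G H).verts
  R := fun u v => (gparr G H).R u v ∨
    (u % 2 = 0 ∧ v % 2 = 1 ∧ u / 2 ∈ G.verts ∧ v / 2 ∈ H.verts) ∨
    (u % 2 = 1 ∧ v % 2 = 0 ∧ u / 2 ∈ H.verts ∧ v / 2 ∈ G.verts)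
  lt := (gparr G H).lt
  lab := (gparr G H).lab

/-- `G ◁ H` on labeled graphs. -/
def gseq (G H : LabGraph) : LabGraph where
  verts := (gparr G H).verts
  R := (gparr G H).R
  lt := fun u v => (gparr G H).lt u v ∨
    (u % 2 = 0 ∧ v % 2 = 1 ∧ u / 2 ∈ G.verts ∧ v / 2 ∈ H.verts)
  lab := (gparr G H).lab

/-- The translation `⟦·⟧` of formulas into labeled graphs. -/
def trans : Formula → LabGraph
  | .atom a  => point (.atom a)
  | .natom a => point (.natom a)
  | .one     => point .one
  | .bot     => point .bot
  | .hole    => point .hole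
  | .parr A B => gparr (trans A) (trans B)
  | .tens A B => gtens (trans A) (trans B)
  | .bang A  => gseq (point .bang) (trans A)
  | .quest A => gseq (point .quest) (trans A)

/-- The translation of a sequent (represented as a non-empty list): `⅋` of the members. -/
def transSeq : List Formula → LabGraph
  | [] => point .hole
  | [A] => trans A
  | A :: B :: Γ => gparr (trans A) (transSeq (B :: Γ))

/-- Isomorphism of labeled mixed graphs. -/
def Iso (G H : LabGraph) : Prop :=
  ∃ f : ℕ → ℕ, Set.BijOn f ↑G.verts ↑H.verts ∧
    (∀ u ∈ G.verts, ∀ v ∈ G.verts,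
      (G.R u v ↔ H.R (f u) (f v)) ∧ (G.lt u v ↔ H.lt (f u) (f v))) ∧
    (∀ v ∈ G.verts, H.lab (f v) = G.lab v)

end LabGraph

/-! ## RGB-cographs -/

/-- An RGB-cograph: a labeled graph together with a linking relation. -/
structure RGB extends LabGraph where
  link : ℕ → ℕ → Prop

namespace RGB

/-- The conditions for being an RGB-cograph. -/
def IsRGB (G : RGB) : Prop :=
  G.toLabGraph.IsModalWeb ∧
  (∀ v ∈ G.verts, G.link v v) ∧
  (∀ u v, G.link u v → G.link v u) ∧
  (∀ u v w, G.link u v → G.link v w → G.link u w) ∧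
  (∀ u v, G.link u v → u ∈ G.verts ∧ v ∈ G.verts) ∧
  (∀ v ∈ G.verts, (G.lab v).isAtom →
      ∃! w, w ≠ v ∧ G.link v w ∧ (G.lab w).isAtom) ∧
  (∀ v ∈ G.verts, G.lab v = GLabel.one →
      ∀ w, G.link v w → w ≠ v → G.lab w = GLabel.hole) ∧
  (∀ v ∈ G.verts, G.lab v = GLabel.hole →
      ∃ w, G.link v w ∧ ((G.lab w).isAtom ∨ G.lab w = GLabel.one)) ∧
  (∀ v ∈ G.verts, (G.lab v = GLabel.bang ∨ G.lab v = GLabel.quest) →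
      (∃! w, G.link v w ∧ G.lab w = GLabel.bang) ∧
      (∀ w, G.link v w → G.lab w ≠ GLabel.hole))

/-- Adjacency by an `R`- or `lt`-edge (in either direction). -/
def rlAdj (G : RGB) (u v : ℕ) : Prop :=
  G.R u v ∨ G.R v u ∨ G.lt u v ∨ G.lt v u

/-- Adjacency by a linking edge. -/
def lkAdj (G : RGB) (u v : ℕ) : Prop := G.link u v ∧ u ≠ v

/-- A single step of an alternating path; `true` = linking edge, `false` = R/lt edge. -/
def aeStep (G : RGB) : Bool → ℕ → ℕ → Prop
  | true,  u, v => G.lkAdj u v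
  | false, u, v => G.rlAdj u v

/-- The edges of the list alternate, starting with an edge of kind `b`. -/
def AltChain (G : RGB) : Bool → List ℕ → Prop
  | _, [] => True
  | _, [_] => True
  | b, u :: v :: l => G.aeStep b u v ∧ AltChain G (!b) (v :: l)

/-- An æ-path: a non-empty elementary alternating path on vertices of `G`. -/
def IsAEPath (G : RGB) (l : List ℕ) : Prop :=
  l ≠ [] ∧ l.Nodup ∧ (∀ v ∈ l, v ∈ G.verts) ∧ ∃ b, G.AltChain b l

/-- A path is chordless if no `R`/`lt` edge joins two non-consecutive vertices. -/
def Chordless (G : RGB) (l : List ℕ) : Prop :=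
  ∀ (i j : ℕ) (hi : i < l.length) (hj : j < l.length), i + 2 ≤ j →
    ¬ G.rlAdj (l.get ⟨i, hi⟩) (l.get ⟨j, hj⟩)

/-- æ-connectedness: any two vertices are joined by a chordless æ-path. -/
def AEConnected (G : RGB) : Prop :=
  ∀ u ∈ G.verts, ∀ v ∈ G.verts,
    ∃ l, G.IsAEPath l ∧ G.Chordless l ∧ l.head? = some u ∧ l.getLast? = some v

/-- An æ-cycle, represented by the list of its (distinct) vertices; the closing edge
returns to the first vertex and the number of edges is even so that alternation closes. -/
def IsAECycle (G : RGB) (l : List ℕ) : Prop :=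
  2 ≤ l.length ∧ l.length % 2 = 0 ∧ l.Nodup ∧ (∀ v ∈ l, v ∈ G.verts) ∧
  ∃ b, G.AltChain b (l ++ [l.headI])

/-- Chordlessness for cycles: no `R`/`lt` edge between cyclically non-consecutive
vertices. -/
def ChordlessCyc (G : RGB) (l : List ℕ) : Prop :=
  ∀ (i j : ℕ) (hi : i < l.length) (hj : j < l.length), i + 2 ≤ j →
    ¬ (i = 0 ∧ j = l.length - 1) →
    ¬ G.rlAdj (l.get ⟨i, hi⟩) (l.get ⟨j, hj⟩)

/-- æ-acyclicity: no chordless æ-cycle. -/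
def AEAcyclic (G : RGB) : Prop :=
  ¬ ∃ l, G.IsAECycle l ∧ G.ChordlessCyc l

/-- MELL-correctness of an RGB-cograph. -/
def MELLCorrect (G : RGB) : Prop :=
  G.verts.Nonempty ∧ G.AEConnected ∧ G.AEAcyclic ∧
  (∀ w v v', G.lt w v → G.link v v' → ∃ w', G.link w' w ∧ G.lt w' v')

/-- MLL-correctness: MELL-correct and every vertex is atomic. -/
def MLLCorrect (G : RGB) : Prop :=
  G.MELLCorrect ∧ ∀ v ∈ G.verts, (G.lab v).isAtom

/-- MLLu-correctness: MELL-correct and every vertex is atomic, `1` or `∘`. -/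
def MLLuCorrect (G : RGB) : Prop :=
  G.MELLCorrect ∧
  ∀ v ∈ G.verts, (G.lab v).isAtom ∨ G.lab v = GLabel.one ∨ G.lab v = GLabel.hole

end RGB

/-! ## Fibrations -/

/-- No edge at all between `u` and `v` in the labeled graph `H`. -/
def LabGraph.noE (H : LabGraph) (u v : ℕ) : Prop := H.toMGraph.noEdge u v

/-- A linear fibration between labeled modal relation webs. -/
def IsLinearFib (G H : LabGraph) (f : ℕ → ℕ) : Prop :=
  (∀ v ∈ G.verts, f v ∈ H.verts) ∧
  -- (1) preservation of R and lt
  (∀ u v, u ∈ G.verts → v ∈ G.verts →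
    (G.R u v → H.R (f u) (f v)) ∧ (G.lt u v → H.lt (f u) (f v))) ∧
  -- (2) skew lifting
  (∀ v ∈ G.verts, ∀ w ∈ H.verts,
    (H.R w (f v) → ∃ u ∈ G.verts, G.R u v ∧ H.noE w (f u)) ∧
    (H.lt w (f v) → ∃ u ∈ G.verts, G.lt u v ∧ H.noE w (f u))) ∧
  -- (3) modality
  (∀ u v, u ∈ G.verts → v ∈ G.verts → u ≠ v → G.noE u v → H.lt (f u) (f v) →
    ∃ w ∈ G.verts, (G.lt w v ∧ f w = f u) ∨ (G.lt u w ∧ f w = f v)) ∧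
  -- (4) labels
  (∀ v ∈ G.verts,
    (G.lab v ≠ GLabel.hole → H.lab (f v) = G.lab v) ∧
    (G.lab v = GLabel.hole →
      H.lab (f v) = GLabel.hole ∨ H.lab (f v) = GLabel.bot ∨ H.lab (f v) = GLabel.quest)) ∧
  -- (5) ∘-domination
  (∀ w ∈ H.verts, (∀ v ∈ G.verts, f v ≠ w) →
    ∃ u ∈ G.verts, G.lab u = GLabel.hole ∧ H.lab (f u) = GLabel.quest ∧ H.lt (f u) w ∧
      ∀ v ∈ G.verts, (H.R (f v) (f u) ↔ H.R (f v) w) ∧ (H.lt (f v) (f u) ↔ H.lt (f v) w)) ∧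
  -- (6) ?-domination
  (∀ v₁ v₂, v₁ ∈ G.verts → v₂ ∈ G.verts → v₁ ≠ v₂ → f v₁ = f v₂ →
    ∃ w₁ w₂, w₁ ∈ G.verts ∧ w₂ ∈ G.verts ∧ w₁ ≠ w₂ ∧ f w₁ = f w₂ ∧
      H.lab (f w₁) = GLabel.quest ∧
      ((w₁ = v₁ ∧ w₂ = v₂) ∨ (G.lt w₁ v₁ ∧ G.lt w₂ v₂)))

/-- `v` and `w` are clones: every other vertex relates to them in the same way. -/
def Clones (G : LabGraph) (v w : ℕ) : Prop :=
  ∀ u ∈ G.verts, u ≠ v → u ≠ w →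
    (G.R u v ↔ G.R u w) ∧ (G.lt u v ↔ G.lt u w) ∧ (G.lt v u ↔ G.lt w u) ∧
    (G.noE u v ↔ G.noE u w)

/-- A ?-map between labeled modal relation webs. -/
def IsQMap (G H : LabGraph) (f : ℕ → ℕ) : Prop :=
  (∀ v ∈ G.verts, f v ∈ H.verts) ∧
  (∀ v w, v ∈ G.verts → w ∈ G.verts → v ≠ w → f v = f w →
    Clones G v w ∧ G.lt v w ∧ H.lab (f v) = G.lab w ∧
    (G.lab w = GLabel.quest ∨ G.lab w = GLabel.hole)) ∧
  (∀ v w, v ∈ G.verts → w ∈ G.verts → f v ≠ f w →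
    (G.R v w → H.R (f v) (f w)) ∧ (G.lt v w → H.lt (f v) (f w)) ∧
    (G.lt w v → H.lt (f w) (f v)) ∧ (G.noE v w → H.noE (f v) (f w))) ∧
  (∀ w ∈ H.verts, (∀ v ∈ G.verts, f v ≠ w) →
    H.lab w = GLabel.quest ∧ ∃ x, H.lt w x)

/-- A MELL-fibration: the composite of a ?-map followed by a linear fibration. -/
def IsMELLFib (G H : LabGraph) (f : ℕ → ℕ) : Prop :=
  ∃ (K : LabGraph) (g h : ℕ → ℕ),
    K.IsModalWeb ∧ IsQMap G K g ∧ IsLinearFib K H h ∧ ∀ v ∈ G.verts, f v = h (g v)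

/-- A MLLu-fibration: a MELL-fibration whose codomain has no `!` or `?` vertex. -/
def IsMLLuFib (G H : LabGraph) (f : ℕ → ℕ) : Prop :=
  IsMELLFib G H f ∧
  ∀ v ∈ H.verts, H.lab v ≠ GLabel.bang ∧ H.lab v ≠ GLabel.quest

/-- A MLL-fibration: a bijection whose codomain has no `!`, `?` or `∘` vertex. -/
def IsMLLFib (G H : LabGraph) (f : ℕ → ℕ) : Prop :=
  Set.BijOn f ↑G.verts ↑H.verts ∧
  ∀ v ∈ H.verts,
    H.lab v ≠ GLabel.bang ∧ H.lab v ≠ GLabel.quest ∧ H.lab v ≠ GLabel.hole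

/-- An allegiant map from an RGB-cograph to a labeled relation web. -/
def Allegiant (G : RGB) (H : LabGraph) (f : ℕ → ℕ) : Prop :=
  (∀ v w, v ∈ G.verts → w ∈ G.verts → G.link v w → v ≠ w →
    (G.lab v).isAtom → (G.lab w).isAtom →
    ∃ n : ℕ, (H.lab (f v) = GLabel.atom n ∧ H.lab (f w) = GLabel.natom n) ∨
             (H.lab (f v) = GLabel.natom n ∧ H.lab (f w) = GLabel.atom n)) ∧
  (∀ v ∈ G.verts, G.lab v ≠ GLabel.hole → H.lab (f v) = G.lab v) ∧
  (∀ v ∈ G.verts, G.lab v = GLabel.hole →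
    H.lab (f v) = GLabel.bot ∨ H.lab (f v) = GLabel.quest)

/-! ## Systems, correctness and combinatorial proofs, parametrized by X -/

inductive Sys where
  | MLL | MLLu | MELL

/-- Provability in the sequent system `X`. -/
def SysProv : Sys → Sequent → Prop
  | Sys.MLL  => ProvMLL
  | Sys.MLLu => ProvMLLu
  | Sys.MELL => ProvMELL

/-- Provability in the linear system `X^ℓ`. -/
def SysProvLin : Sys → Sequent → Prop
  | Sys.MLL  => ProvMLL
  | Sys.MLLu => ProvMLLuLin
  | Sys.MELL => ProvMELLLin

/-- The appropriate class of formulas for `X`: MELL-formulas for MELL; formulas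
without modalities for MLLu; formulas without modalities and without `∘` for MLL. -/
def SysForm : Sys → Formula → Prop
  | Sys.MLL  => fun F => F.noMod ∧ F.isMELL
  | Sys.MLLu => Formula.noMod
  | Sys.MELL => Formula.isMELL

/-- `X`-correctness of RGB-cographs. -/
def SysCorrect : Sys → RGB → Prop
  | Sys.MLL  => RGB.MLLCorrect
  | Sys.MLLu => RGB.MLLuCorrect
  | Sys.MELL => RGB.MELLCorrect

/-- `X`-fibrations. -/
def SysFib : Sys → LabGraph → LabGraph → (ℕ → ℕ) → Prop
  | Sys.MLL  => IsMLLFib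
  | Sys.MLLu => IsMLLuFib
  | Sys.MELL => IsMELLFib

/-- An `X`-combinatorial proof with conclusion graph `H`: an allegiant `X`-fibration
from an `X`-correct RGB-cograph. -/
def IsCombProof (X : Sys) (G : RGB) (f : ℕ → ℕ) (H : LabGraph) : Prop :=
  G.IsRGB ∧ SysCorrect X G ∧ Allegiant G H f ∧ SysFib X G.toLabGraph H f



/-! ### Auxiliary development for Statement 7 -/

namespace LabGraph

lemma mem_gparr_verts {G H : LabGraph} {v : ℕ} :
    v ∈ (gparr G H).verts ↔ (v % 2 = 0 ∧ v / 2 ∈ G.verts) ∨ (v % 2 = 1 ∧ v / 2 ∈ H.verts) := by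
  constructor
  · intro hv
    rcases Finset.mem_union.1 hv with h | h
    · obtain ⟨a, ha, rfl⟩ := Finset.mem_image.1 h
      left; refine ⟨by omega, ?_⟩
      have h2 : 2 * a / 2 = a := by omega
      rwa [h2]
    · obtain ⟨b, hb, rfl⟩ := Finset.mem_image.1 h
      right; refine ⟨by omega, ?_⟩
      have h2 : (2 * b + 1) / 2 = b := by omega
      rwa [h2]
  · rintro (⟨h0, h1⟩ | ⟨h0, h1⟩)
    · exact Finset.mem_union_left _ (Finset.mem_image.2 ⟨v / 2, h1, by omega⟩)
    · exact Finset.mem_union_right _ (Finset.mem_image.2 ⟨v / 2, h1, by omega⟩)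

/-- Binary graph operation: `⊗` if `t`, `⅋` otherwise. -/
def gbin (t : Bool) (G H : LabGraph) : LabGraph := if t then gtens G H else gparr G H

/-- Binary formula connective: `⊗` if `t`, `⅋` otherwise. -/
def fbin (t : Bool) (A B : Formula) : Formula := if t then Formula.tens A B else Formula.parr A B

lemma trans_fbin (t : Bool) (A B : Formula) :
    trans (fbin t A B) = gbin t (trans A) (trans B) := by cases t <;> rfl

lemma gbin_verts {t : Bool} {G H : LabGraph} : (gbin t G H).verts = (gparr G H).verts := by
  cases t <;> rfl

lemma mem_gbin_verts {t : Bool} {G H : LabGraph} {v : ℕ} :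
    v ∈ (gbin t G H).verts ↔ (v % 2 = 0 ∧ v / 2 ∈ G.verts) ∨ (v % 2 = 1 ∧ v / 2 ∈ H.verts) := by
  rw [gbin_verts]; exact mem_gparr_verts

lemma gbin_lab {t : Bool} {G H : LabGraph} {v : ℕ} :
    (gbin t G H).lab v = if v % 2 = 0 then G.lab (v/2) else H.lab (v/2) := by cases t <;> rfl

lemma gbin_lt {t : Bool} {G H : LabGraph} {u v : ℕ} :
    (gbin t G H).lt u v ↔
    (u % 2 = 0 ∧ v % 2 = 0 ∧ G.lt (u/2) (v/2)) ∨ (u % 2 = 1 ∧ v % 2 = 1 ∧ H.lt (u/2) (v/2)) := by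
  cases t <;> rfl

lemma gbin_R {t : Bool} {G H : LabGraph} {u v : ℕ} :
    (gbin t G H).R u v ↔
    (u % 2 = 0 ∧ v % 2 = 0 ∧ G.R (u/2) (v/2)) ∨ (u % 2 = 1 ∧ v % 2 = 1 ∧ H.R (u/2) (v/2)) ∨
    (t = true ∧ ((u % 2 = 0 ∧ v % 2 = 1 ∧ u/2 ∈ G.verts ∧ v/2 ∈ H.verts) ∨
                 (u % 2 = 1 ∧ v % 2 = 0 ∧ u/2 ∈ H.verts ∧ v/2 ∈ G.verts))) := by
  cases t
  · show (gparr G H).R u v ↔ _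
    simp [gparr]
  · show (gtens G H).R u v ↔ _
    simp [gtens, gparr]
    tauto

lemma even_mem_gparr {G H : LabGraph} {a : ℕ} (h : a ∈ G.verts) :
    2 * a ∈ (gparr G H).verts := by
  refine mem_gparr_verts.2 (Or.inl ⟨by omega, ?_⟩)
  have h2 : 2*a/2 = a := by omega
  rwa [h2]

lemma odd_mem_gparr {G H : LabGraph} {b : ℕ} (h : b ∈ H.verts) :
    2 * b + 1 ∈ (gparr G H).verts := by
  refine mem_gparr_verts.2 (Or.inr ⟨by omega, ?_⟩)
  have h2 : (2*b+1)/2 = b := by omega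
  rwa [h2]

lemma trans_verts_nonempty (F : Formula) : (trans F).verts.Nonempty := by
  induction F with
  | atom a => exact ⟨0, by simp [trans, point]⟩
  | natom a => exact ⟨0, by simp [trans, point]⟩
  | bot => exact ⟨0, by simp [trans, point]⟩
  | one => exact ⟨0, by simp [trans, point]⟩
  | hole => exact ⟨0, by simp [trans, point]⟩
  | parr A B ihA ihB => obtain ⟨a, ha⟩ := ihA; exact ⟨2*a, even_mem_gparr ha⟩
  | tens A B ihA ihB => obtain ⟨a, ha⟩ := ihA; exact ⟨2*a, even_mem_gparr (H := trans B) ha⟩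
  | bang A ih => exact ⟨0, even_mem_gparr (a := 0) (by simp [point])⟩
  | quest A ih => exact ⟨0, even_mem_gparr (a := 0) (by simp [point])⟩


/-! #### Isomorphism-as-function and its algebra -/

def IsoF (f : ℕ → ℕ) (G H : LabGraph) : Prop :=
  Set.BijOn f ↑G.verts ↑H.verts ∧
  (∀ u ∈ G.verts, ∀ v ∈ G.verts,
      (G.R u v ↔ H.R (f u) (f v)) ∧ (G.lt u v ↔ H.lt (f u) (f v))) ∧
  (∀ v ∈ G.verts, H.lab (f v) = G.lab v)

lemma iso_def {G H : LabGraph} : Iso G H ↔ ∃ f, IsoF f G H := Iff.rfl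

lemma IsoF.id (G : LabGraph) : IsoF id G G :=
  ⟨Set.bijOn_id _, fun u _ v _ => ⟨Iff.rfl, Iff.rfl⟩, fun _ _ => rfl⟩

lemma IsoF.comp {f g : ℕ → ℕ} {G H K : LabGraph}
    (hf : IsoF f G H) (hg : IsoF g H K) : IsoF (g ∘ f) G K := by
  obtain ⟨fbij, fedge, flab⟩ := hf
  obtain ⟨gbij, gedge, glab⟩ := hg
  refine ⟨gbij.comp fbij, ?_, ?_⟩
  · intro u hu v hv
    have hfu : f u ∈ H.verts := fbij.mapsTo hu
    have hfv : f v ∈ H.verts := fbij.mapsTo hv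
    constructor
    · exact (fedge u hu v hv).1.trans (gedge _ hfu _ hfv).1
    · exact (fedge u hu v hv).2.trans (gedge _ hfu _ hfv).2
  · intro v hv
    have hfv : f v ∈ H.verts := fbij.mapsTo hv
    exact (glab _ hfv).trans (flab _ hv)

lemma IsoF.symm {f : ℕ → ℕ} {G H : LabGraph} (h : IsoF f G H) : ∃ g, IsoF g H G := by
  obtain ⟨hbij, hedge, hlab⟩ := h
  refine ⟨Function.invFunOn f ↑G.verts, ?_⟩
  have hinv : Set.InvOn (Function.invFunOn f ↑G.verts) f ↑G.verts ↑H.verts :=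
    hbij.invOn_invFunOn
  set g := Function.invFunOn f ↑G.verts
  have hbij' : Set.BijOn g ↑H.verts ↑G.verts := Set.BijOn.symm hinv.symm hbij
  have hfg : ∀ y ∈ H.verts, f (g y) = y := fun y hy => hinv.2 hy
  have hgmem : ∀ y ∈ H.verts, g y ∈ G.verts := fun y hy => hbij'.mapsTo hy
  refine ⟨hbij', ?_, ?_⟩
  · intro u hu v hv
    have h1 := hedge (g u) (hgmem u hu) (g v) (hgmem v hv)
    rw [hfg u hu, hfg v hv] at h1
    exact ⟨h1.1.symm, h1.2.symm⟩
  · intro v hv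
    have := hlab (g v) (hgmem v hv)
    rw [hfg v hv] at this
    exact this.symm

lemma Iso.refl' (G : LabGraph) : Iso G G := ⟨id, (IsoF.id G).1, (IsoF.id G).2.1, (IsoF.id G).2.2⟩

lemma Iso.symm' {G H : LabGraph} (h : Iso G H) : Iso H G := by
  obtain ⟨f, hf⟩ := iso_def.1 h
  obtain ⟨g, hg⟩ := hf.symm
  exact iso_def.2 ⟨g, hg⟩

lemma Iso.trans' {G H K : LabGraph} (h1 : Iso G H) (h2 : Iso H K) : Iso G K := by
  obtain ⟨f, hf⟩ := iso_def.1 h1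
  obtain ⟨g, hg⟩ := iso_def.1 h2
  exact iso_def.2 ⟨g ∘ f, hf.comp hg⟩

/-! #### Literal-form lemmas for `gbin` -/

lemma mem_gbin_even_iff {t : Bool} {G H : LabGraph} {a : ℕ} :
    2 * a ∈ (gbin t G H).verts ↔ a ∈ G.verts := by
  rw [mem_gbin_verts]
  constructor
  · rintro (⟨_, h⟩ | ⟨h, _⟩)
    · have e : 2 * a / 2 = a := by omega
      rwa [e] at h
    · omega
  · intro h
    left
    have e : 2 * a / 2 = a := by omega
    exact ⟨by omega, by rwa [e]⟩

lemma mem_gbin_odd_iff {t : Bool} {G H : LabGraph} {a : ℕ} :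
    2 * a + 1 ∈ (gbin t G H).verts ↔ a ∈ H.verts := by
  rw [mem_gbin_verts]
  constructor
  · rintro (⟨h, _⟩ | ⟨_, h⟩)
    · omega
    · have e : (2 * a + 1) / 2 = a := by omega
      rwa [e] at h
  · intro h
    right
    have e : (2 * a + 1) / 2 = a := by omega
    exact ⟨by omega, by rwa [e]⟩

lemma rep_gbin {t : Bool} {G H : LabGraph} {v : ℕ} (hv : v ∈ (gbin t G H).verts) :
    (∃ a ∈ G.verts, v = 2 * a) ∨ (∃ b ∈ H.verts, v = 2 * b + 1) := by
  rcases mem_gbin_verts.1 hv with ⟨h0, h1⟩ | ⟨h0, h1⟩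
  · exact Or.inl ⟨v / 2, h1, by omega⟩
  · exact Or.inr ⟨v / 2, h1, by omega⟩

lemma gbin_R_ee {t : Bool} {G H : LabGraph} {a b : ℕ} :
    (gbin t G H).R (2 * a) (2 * b) ↔ G.R a b := by
  have ea : 2 * a / 2 = a := by omega
  have eb : 2 * b / 2 = b := by omega
  have pa : 2 * a % 2 = 0 := by omega
  have pb : 2 * b % 2 = 0 := by omega
  rw [gbin_R, ea, eb, pa, pb]
  simp

lemma gbin_R_oo {t : Bool} {G H : LabGraph} {a b : ℕ} :
    (gbin t G H).R (2 * a + 1) (2 * b + 1) ↔ H.R a b := by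
  have ea : (2 * a + 1) / 2 = a := by omega
  have eb : (2 * b + 1) / 2 = b := by omega
  have pa : (2 * a + 1) % 2 = 1 := by omega
  have pb : (2 * b + 1) % 2 = 1 := by omega
  rw [gbin_R, ea, eb, pa, pb]
  simp

lemma gbin_R_eo {t : Bool} {G H : LabGraph} {a b : ℕ} :
    (gbin t G H).R (2 * a) (2 * b + 1) ↔ (t = true ∧ a ∈ G.verts ∧ b ∈ H.verts) := by
  have ea : 2 * a / 2 = a := by omega
  have eb : (2 * b + 1) / 2 = b := by omega
  have pa : 2 * a % 2 = 0 := by omega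
  have pb : (2 * b + 1) % 2 = 1 := by omega
  rw [gbin_R, ea, eb, pa, pb]
  simp

lemma gbin_R_oe {t : Bool} {G H : LabGraph} {a b : ℕ} :
    (gbin t G H).R (2 * a + 1) (2 * b) ↔ (t = true ∧ a ∈ H.verts ∧ b ∈ G.verts) := by
  have ea : (2 * a + 1) / 2 = a := by omega
  have eb : 2 * b / 2 = b := by omega
  have pa : (2 * a + 1) % 2 = 1 := by omega
  have pb : 2 * b % 2 = 0 := by omega
  rw [gbin_R, ea, eb, pa, pb]
  simp

lemma gbin_lt_ee {t : Bool} {G H : LabGraph} {a b : ℕ} :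
    (gbin t G H).lt (2 * a) (2 * b) ↔ G.lt a b := by
  have ea : 2 * a / 2 = a := by omega
  have eb : 2 * b / 2 = b := by omega
  have pa : 2 * a % 2 = 0 := by omega
  have pb : 2 * b % 2 = 0 := by omega
  rw [gbin_lt, ea, eb, pa, pb]
  simp

lemma gbin_lt_oo {t : Bool} {G H : LabGraph} {a b : ℕ} :
    (gbin t G H).lt (2 * a + 1) (2 * b + 1) ↔ H.lt a b := by
  have ea : (2 * a + 1) / 2 = a := by omega
  have eb : (2 * b + 1) / 2 = b := by omega
  have pa : (2 * a + 1) % 2 = 1 := by omega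
  have pb : (2 * b + 1) % 2 = 1 := by omega
  rw [gbin_lt, ea, eb, pa, pb]
  simp

lemma gbin_lt_eo {t : Bool} {G H : LabGraph} {a b : ℕ} :
    (gbin t G H).lt (2 * a) (2 * b + 1) ↔ False := by
  have pa : 2 * a % 2 = 0 := by omega
  have pb : (2 * b + 1) % 2 = 1 := by omega
  rw [gbin_lt, pa, pb]
  simp

lemma gbin_lt_oe {t : Bool} {G H : LabGraph} {a b : ℕ} :
    (gbin t G H).lt (2 * a + 1) (2 * b) ↔ False := by
  have pa : (2 * a + 1) % 2 = 1 := by omega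
  have pb : 2 * b % 2 = 0 := by omega
  rw [gbin_lt, pa, pb]
  simp

lemma gbin_lab_e {t : Bool} {G H : LabGraph} {a : ℕ} :
    (gbin t G H).lab (2 * a) = G.lab a := by
  have ea : 2 * a / 2 = a := by omega
  have pa : 2 * a % 2 = 0 := by omega
  rw [gbin_lab, ea, pa]
  simp

lemma gbin_lab_o {t : Bool} {G H : LabGraph} {a : ℕ} :
    (gbin t G H).lab (2 * a + 1) = H.lab a := by
  have ea : (2 * a + 1) / 2 = a := by omega
  have pa : (2 * a + 1) % 2 = 1 := by omega
  rw [gbin_lab, ea, pa]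
  simp


/-! #### Congruence isomorphisms -/

def pairMap (f g : ℕ → ℕ) (v : ℕ) : ℕ :=
  if v % 2 = 0 then 2 * f (v / 2) else 2 * g (v / 2) + 1

lemma pairMap_e {f g : ℕ → ℕ} {a : ℕ} : pairMap f g (2 * a) = 2 * f a := by
  unfold pairMap
  rw [if_pos (by omega)]
  have e : 2 * a / 2 = a := by omega
  rw [e]

lemma pairMap_o {f g : ℕ → ℕ} {a : ℕ} : pairMap f g (2 * a + 1) = 2 * g a + 1 := by
  unfold pairMap
  rw [if_neg (by omega)]
  have e : (2 * a + 1) / 2 = a := by omega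
  rw [e]

lemma IsoF.pairMap_gbin {t : Bool} {f g : ℕ → ℕ} {G G' H H' : LabGraph}
    (hf : IsoF f G G') (hg : IsoF g H H') :
    IsoF (pairMap f g) (gbin t G H) (gbin t G' H') := by
  obtain ⟨⟨fmap, finj, fsur⟩, fedge, flab⟩ := hf
  obtain ⟨⟨gmap, ginj, gsur⟩, gedge, glab⟩ := hg
  refine ⟨⟨?_, ?_, ?_⟩, ?_, ?_⟩
  · -- MapsTo
    intro v hv
    rcases rep_gbin (Finset.mem_coe.1 hv) with ⟨a, ha, rfl⟩ | ⟨b, hb, rfl⟩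
    · rw [pairMap_e]
      exact Finset.mem_coe.2 (mem_gbin_even_iff.2 (fmap (Finset.mem_coe.2 ha)))
    · rw [pairMap_o]
      exact Finset.mem_coe.2 (mem_gbin_odd_iff.2 (gmap (Finset.mem_coe.2 hb)))
  · -- InjOn
    intro u hu v hv heq
    rcases rep_gbin (Finset.mem_coe.1 hu) with ⟨a, ha, rfl⟩ | ⟨a, ha, rfl⟩ <;>
      rcases rep_gbin (Finset.mem_coe.1 hv) with ⟨b, hb, rfl⟩ | ⟨b, hb, rfl⟩
    · rw [pairMap_e, pairMap_e] at heq
      have : f a = f b := by omega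
      have : a = b := finj (Finset.mem_coe.2 ha) (Finset.mem_coe.2 hb) this
      omega
    · rw [pairMap_e, pairMap_o] at heq
      omega
    · rw [pairMap_o, pairMap_e] at heq
      omega
    · rw [pairMap_o, pairMap_o] at heq
      have : g a = g b := by omega
      have : a = b := ginj (Finset.mem_coe.2 ha) (Finset.mem_coe.2 hb) this
      omega
  · -- SurjOn
    intro w hw
    rcases rep_gbin (Finset.mem_coe.1 hw) with ⟨a, ha, rfl⟩ | ⟨b, hb, rfl⟩
    · obtain ⟨x, hx, hfx⟩ := fsur (Finset.mem_coe.2 ha)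
      refine ⟨2 * x, Finset.mem_coe.2 (mem_gbin_even_iff.2 (Finset.mem_coe.1 hx)), ?_⟩
      rw [pairMap_e, hfx]
    · obtain ⟨x, hx, hgx⟩ := gsur (Finset.mem_coe.2 hb)
      refine ⟨2 * x + 1, Finset.mem_coe.2 (mem_gbin_odd_iff.2 (Finset.mem_coe.1 hx)), ?_⟩
      rw [pairMap_o, hgx]
  · -- edges
    intro u hu v hv
    rcases rep_gbin hu with ⟨a, ha, rfl⟩ | ⟨a, ha, rfl⟩ <;>
      rcases rep_gbin hv with ⟨b, hb, rfl⟩ | ⟨b, hb, rfl⟩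
    · rw [pairMap_e, pairMap_e]
      rw [gbin_R_ee, gbin_R_ee, gbin_lt_ee, gbin_lt_ee]
      exact fedge a ha b hb
    · rw [pairMap_e, pairMap_o]
      rw [gbin_R_eo, gbin_R_eo, gbin_lt_eo, gbin_lt_eo]
      constructor
      · constructor
        · rintro ⟨ht, h1, h2⟩
          exact ⟨ht, fmap h1, gmap h2⟩
        · rintro ⟨ht, _, _⟩
          exact ⟨ht, ha, hb⟩
      · exact Iff.rfl
    · rw [pairMap_o, pairMap_e]
      rw [gbin_R_oe, gbin_R_oe, gbin_lt_oe, gbin_lt_oe]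
      constructor
      · constructor
        · rintro ⟨ht, h1, h2⟩
          exact ⟨ht, gmap h1, fmap h2⟩
        · rintro ⟨ht, _, _⟩
          exact ⟨ht, ha, hb⟩
      · exact Iff.rfl
    · rw [pairMap_o, pairMap_o]
      rw [gbin_R_oo, gbin_R_oo, gbin_lt_oo, gbin_lt_oo]
      exact gedge a ha b hb
  · -- labels
    intro v hv
    rcases rep_gbin hv with ⟨a, ha, rfl⟩ | ⟨a, ha, rfl⟩
    · rw [pairMap_e, gbin_lab_e, gbin_lab_e]
      exact flab a ha
    · rw [pairMap_o, gbin_lab_o, gbin_lab_o]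
      exact glab a ha

/-! #### Explicit isomorphisms: commutativity, associativity, shuffle -/

def fComm (v : ℕ) : ℕ := if v % 2 = 0 then v + 1 else v - 1
def fAssoc (v : ℕ) : ℕ := if v % 4 = 0 then v / 2 else if v % 4 = 2 then v - 1 else 2 * v + 1
def gAssoc (v : ℕ) : ℕ := if v % 2 = 0 then 2 * v else if v % 4 = 1 then v + 1 else (v - 1) / 2
def fShuffle (v : ℕ) : ℕ := if v % 4 = 1 then v + 1 else if v % 4 = 2 then v - 1 else v

lemma fComm_e {a : ℕ} : fComm (2 * a) = 2 * a + 1 := by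
  unfold fComm; rw [if_pos (by omega)]

lemma fComm_o {a : ℕ} : fComm (2 * a + 1) = 2 * a := by
  unfold fComm; rw [if_neg (by omega)]; omega

lemma fAssoc_0 {a : ℕ} : fAssoc (2 * (2 * a)) = 2 * a := by
  unfold fAssoc; rw [if_pos (by omega)]; omega

lemma fAssoc_2 {b : ℕ} : fAssoc (2 * (2 * b + 1)) = 2 * (2 * b) + 1 := by
  unfold fAssoc; rw [if_neg (by omega), if_pos (by omega)]; omega

lemma fAssoc_1 {c : ℕ} : fAssoc (2 * c + 1) = 2 * (2 * c + 1) + 1 := by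
  unfold fAssoc; rw [if_neg (by omega), if_neg (by omega)]

lemma gAssoc_e {a : ℕ} : gAssoc (2 * a) = 2 * (2 * a) := by
  unfold gAssoc; rw [if_pos (by omega)]

lemma gAssoc_1 {b : ℕ} : gAssoc (2 * (2 * b) + 1) = 2 * (2 * b + 1) := by
  unfold gAssoc; rw [if_neg (by omega), if_pos (by omega)]; omega

lemma gAssoc_3 {c : ℕ} : gAssoc (2 * (2 * c + 1) + 1) = 2 * c + 1 := by
  unfold gAssoc; rw [if_neg (by omega), if_neg (by omega)]; omega

lemma fShuffle_a {a : ℕ} : fShuffle (2 * (2 * a)) = 2 * (2 * a) := by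
  unfold fShuffle; rw [if_neg (by omega), if_neg (by omega)]

lemma fShuffle_b {b : ℕ} : fShuffle (2 * (2 * b + 1)) = 2 * (2 * b) + 1 := by
  unfold fShuffle; rw [if_neg (by omega), if_pos (by omega)]; omega

lemma fShuffle_c {c : ℕ} : fShuffle (2 * (2 * c) + 1) = 2 * (2 * c + 1) := by
  unfold fShuffle; rw [if_pos (by omega)]; omega

lemma fShuffle_d {d : ℕ} : fShuffle (2 * (2 * d + 1) + 1) = 2 * (2 * d + 1) + 1 := by
  unfold fShuffle; rw [if_neg (by omega), if_neg (by omega)]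

lemma rep_gbin2L {t s : Bool} {G H K : LabGraph} {v : ℕ}
    (hv : v ∈ (gbin t (gbin s G H) K).verts) :
    (∃ a ∈ G.verts, v = 2 * (2 * a)) ∨ (∃ b ∈ H.verts, v = 2 * (2 * b + 1)) ∨
    (∃ c ∈ K.verts, v = 2 * c + 1) := by
  rcases rep_gbin hv with ⟨x, hx, rfl⟩ | ⟨c, hc, rfl⟩
  · rcases rep_gbin hx with ⟨a, ha, rfl⟩ | ⟨b, hb, rfl⟩
    · exact Or.inl ⟨a, ha, rfl⟩
    · exact Or.inr (Or.inl ⟨b, hb, rfl⟩)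
  · exact Or.inr (Or.inr ⟨c, hc, rfl⟩)

lemma rep_gbin2R {t s : Bool} {G H K : LabGraph} {v : ℕ}
    (hv : v ∈ (gbin t G (gbin s H K)).verts) :
    (∃ a ∈ G.verts, v = 2 * a) ∨ (∃ b ∈ H.verts, v = 2 * (2 * b) + 1) ∨
    (∃ c ∈ K.verts, v = 2 * (2 * c + 1) + 1) := by
  rcases rep_gbin hv with ⟨a, ha, rfl⟩ | ⟨x, hx, rfl⟩
  · exact Or.inl ⟨a, ha, rfl⟩
  · rcases rep_gbin hx with ⟨b, hb, rfl⟩ | ⟨c, hc, rfl⟩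
    · exact Or.inr (Or.inl ⟨b, hb, rfl⟩)
    · exact Or.inr (Or.inr ⟨c, hc, rfl⟩)

lemma rep_gbin2LL {t s u : Bool} {G H K L : LabGraph} {v : ℕ}
    (hv : v ∈ (gbin t (gbin s G H) (gbin u K L)).verts) :
    (∃ a ∈ G.verts, v = 2 * (2 * a)) ∨ (∃ b ∈ H.verts, v = 2 * (2 * b + 1)) ∨
    (∃ c ∈ K.verts, v = 2 * (2 * c) + 1) ∨ (∃ d ∈ L.verts, v = 2 * (2 * d + 1) + 1) := by
  rcases rep_gbin hv with ⟨x, hx, rfl⟩ | ⟨x, hx, rfl⟩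
  · rcases rep_gbin hx with ⟨a, ha, rfl⟩ | ⟨b, hb, rfl⟩
    · exact Or.inl ⟨a, ha, rfl⟩
    · exact Or.inr (Or.inl ⟨b, hb, rfl⟩)
  · rcases rep_gbin hx with ⟨c, hc, rfl⟩ | ⟨d, hd, rfl⟩
    · exact Or.inr (Or.inr (Or.inl ⟨c, hc, rfl⟩))
    · exact Or.inr (Or.inr (Or.inr ⟨d, hd, rfl⟩))

lemma isoF_fComm (t : Bool) (G H : LabGraph) : IsoF fComm (gbin t G H) (gbin t H G) := by
  have m : ∀ (G H : LabGraph), Set.MapsTo fComm ↑(gbin t G H).verts ↑(gbin t H G).verts := by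
    intro G H v hv
    rcases rep_gbin (Finset.mem_coe.1 hv) with ⟨a, ha, rfl⟩ | ⟨b, hb, rfl⟩
    · rw [fComm_e]; exact Finset.mem_coe.2 (mem_gbin_odd_iff.2 ha)
    · rw [fComm_o]; exact Finset.mem_coe.2 (mem_gbin_even_iff.2 hb)
  have li : ∀ (G H : LabGraph), Set.LeftInvOn fComm fComm ↑(gbin t G H).verts := by
    intro G H v hv
    rcases rep_gbin (Finset.mem_coe.1 hv) with ⟨a, ha, rfl⟩ | ⟨b, hb, rfl⟩
    · rw [fComm_e, fComm_o]
    · rw [fComm_o, fComm_e]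
  refine ⟨Set.InvOn.bijOn ⟨li G H, li H G⟩ (m G H) (m H G), ?_, ?_⟩
  · intro u hu v hv
    rcases rep_gbin hu with ⟨a, ha, rfl⟩ | ⟨a, ha, rfl⟩ <;>
      rcases rep_gbin hv with ⟨b, hb, rfl⟩ | ⟨b, hb, rfl⟩ <;>
      simp only [fComm_e, fComm_o, gbin_R_ee, gbin_R_eo, gbin_R_oe, gbin_R_oo,
        gbin_lt_ee, gbin_lt_eo, gbin_lt_oe, gbin_lt_oo] <;>
      constructor <;> first | tauto | rfl
  · intro v hv
    rcases rep_gbin hv with ⟨a, ha, rfl⟩ | ⟨a, ha, rfl⟩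
    · rw [fComm_e, gbin_lab_o, gbin_lab_e]
    · rw [fComm_o, gbin_lab_e, gbin_lab_o]

lemma isoF_fAssoc (t : Bool) (G H K : LabGraph) :
    IsoF fAssoc (gbin t (gbin t G H) K) (gbin t G (gbin t H K)) := by
  have m1 : Set.MapsTo fAssoc ↑(gbin t (gbin t G H) K).verts ↑(gbin t G (gbin t H K)).verts := by
    intro v hv
    rcases rep_gbin2L (Finset.mem_coe.1 hv) with ⟨a, ha, rfl⟩ | ⟨b, hb, rfl⟩ | ⟨c, hc, rfl⟩
    · rw [fAssoc_0]; exact Finset.mem_coe.2 (mem_gbin_even_iff.2 ha)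
    · rw [fAssoc_2]; exact Finset.mem_coe.2 (mem_gbin_odd_iff.2 (mem_gbin_even_iff.2 hb))
    · rw [fAssoc_1]; exact Finset.mem_coe.2 (mem_gbin_odd_iff.2 (mem_gbin_odd_iff.2 hc))
  have m2 : Set.MapsTo gAssoc ↑(gbin t G (gbin t H K)).verts ↑(gbin t (gbin t G H) K).verts := by
    intro v hv
    rcases rep_gbin2R (Finset.mem_coe.1 hv) with ⟨a, ha, rfl⟩ | ⟨b, hb, rfl⟩ | ⟨c, hc, rfl⟩
    · rw [gAssoc_e]; exact Finset.mem_coe.2 (mem_gbin_even_iff.2 (mem_gbin_even_iff.2 ha))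
    · rw [gAssoc_1]; exact Finset.mem_coe.2 (mem_gbin_even_iff.2 (mem_gbin_odd_iff.2 hb))
    · rw [gAssoc_3]; exact Finset.mem_coe.2 (mem_gbin_odd_iff.2 hc)
  have li : Set.LeftInvOn gAssoc fAssoc ↑(gbin t (gbin t G H) K).verts := by
    intro v hv
    rcases rep_gbin2L (Finset.mem_coe.1 hv) with ⟨a, ha, rfl⟩ | ⟨b, hb, rfl⟩ | ⟨c, hc, rfl⟩
    · rw [fAssoc_0, gAssoc_e]
    · rw [fAssoc_2, gAssoc_1]
    · rw [fAssoc_1, gAssoc_3]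
  have ri : Set.LeftInvOn fAssoc gAssoc ↑(gbin t G (gbin t H K)).verts := by
    intro v hv
    rcases rep_gbin2R (Finset.mem_coe.1 hv) with ⟨a, ha, rfl⟩ | ⟨b, hb, rfl⟩ | ⟨c, hc, rfl⟩
    · rw [gAssoc_e, fAssoc_0]
    · rw [gAssoc_1, fAssoc_2]
    · rw [gAssoc_3, fAssoc_1]
  refine ⟨Set.InvOn.bijOn ⟨li, ri⟩ m1 m2, ?_, ?_⟩
  · intro u hu v hv
    rcases rep_gbin2L hu with ⟨a, ha, rfl⟩ | ⟨a, ha, rfl⟩ | ⟨a, ha, rfl⟩ <;>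
      rcases rep_gbin2L hv with ⟨b, hb, rfl⟩ | ⟨b, hb, rfl⟩ | ⟨b, hb, rfl⟩ <;>
      simp only [fAssoc_0, fAssoc_2, fAssoc_1, gbin_R_ee, gbin_R_eo, gbin_R_oe, gbin_R_oo,
        gbin_lt_ee, gbin_lt_eo, gbin_lt_oe, gbin_lt_oo,
        mem_gbin_even_iff, mem_gbin_odd_iff] <;>
      constructor <;> first | tauto | rfl
  · intro v hv
    rcases rep_gbin2L hv with ⟨a, ha, rfl⟩ | ⟨a, ha, rfl⟩ | ⟨a, ha, rfl⟩
    · rw [fAssoc_0]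
      rw [gbin_lab_e (a := 2 * a), gbin_lab_e, gbin_lab_e]
    · rw [fAssoc_2]
      rw [gbin_lab_e (a := 2 * a + 1), gbin_lab_o, gbin_lab_o, gbin_lab_e]
    · rw [fAssoc_1]
      rw [gbin_lab_o (a := a), gbin_lab_o, gbin_lab_o]
  
lemma isoF_gAssoc (t : Bool) (G H K : LabGraph) :
    IsoF gAssoc (gbin t G (gbin t H K)) (gbin t (gbin t G H) K) := by
  have m1 : Set.MapsTo fAssoc ↑(gbin t (gbin t G H) K).verts ↑(gbin t G (gbin t H K)).verts :=
    (isoF_fAssoc t G H K).1.mapsTo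
  have m2 : Set.MapsTo gAssoc ↑(gbin t G (gbin t H K)).verts ↑(gbin t (gbin t G H) K).verts := by
    intro v hv
    rcases rep_gbin2R (Finset.mem_coe.1 hv) with ⟨a, ha, rfl⟩ | ⟨b, hb, rfl⟩ | ⟨c, hc, rfl⟩
    · rw [gAssoc_e]; exact Finset.mem_coe.2 (mem_gbin_even_iff.2 (mem_gbin_even_iff.2 ha))
    · rw [gAssoc_1]; exact Finset.mem_coe.2 (mem_gbin_even_iff.2 (mem_gbin_odd_iff.2 hb))
    · rw [gAssoc_3]; exact Finset.mem_coe.2 (mem_gbin_odd_iff.2 hc)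
  have li : Set.LeftInvOn gAssoc fAssoc ↑(gbin t (gbin t G H) K).verts := by
    intro v hv
    rcases rep_gbin2L (Finset.mem_coe.1 hv) with ⟨a, ha, rfl⟩ | ⟨b, hb, rfl⟩ | ⟨c, hc, rfl⟩
    · rw [fAssoc_0, gAssoc_e]
    · rw [fAssoc_2, gAssoc_1]
    · rw [fAssoc_1, gAssoc_3]
  have ri : Set.LeftInvOn fAssoc gAssoc ↑(gbin t G (gbin t H K)).verts := by
    intro v hv
    rcases rep_gbin2R (Finset.mem_coe.1 hv) with ⟨a, ha, rfl⟩ | ⟨b, hb, rfl⟩ | ⟨c, hc, rfl⟩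
    · rw [gAssoc_e, fAssoc_0]
    · rw [gAssoc_1, fAssoc_2]
    · rw [gAssoc_3, fAssoc_1]
  refine ⟨Set.InvOn.bijOn ⟨ri, li⟩ m2 m1, ?_, ?_⟩
  · intro u hu v hv
    rcases rep_gbin2R hu with ⟨a, ha, rfl⟩ | ⟨a, ha, rfl⟩ | ⟨a, ha, rfl⟩ <;>
      rcases rep_gbin2R hv with ⟨b, hb, rfl⟩ | ⟨b, hb, rfl⟩ | ⟨b, hb, rfl⟩ <;>
      simp only [gAssoc_e, gAssoc_1, gAssoc_3, gbin_R_ee, gbin_R_eo, gbin_R_oe, gbin_R_oo,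
        gbin_lt_ee, gbin_lt_eo, gbin_lt_oe, gbin_lt_oo,
        mem_gbin_even_iff, mem_gbin_odd_iff] <;>
      constructor <;> first | tauto | rfl
  · intro v hv
    rcases rep_gbin2R hv with ⟨a, ha, rfl⟩ | ⟨a, ha, rfl⟩ | ⟨a, ha, rfl⟩
    · rw [gAssoc_e]
      rw [gbin_lab_e (a := 2 * a), gbin_lab_e, gbin_lab_e]
    · rw [gAssoc_1]
      rw [gbin_lab_e (a := 2 * a + 1), gbin_lab_o, gbin_lab_o, gbin_lab_e]
    · rw [gAssoc_3]
      rw [gbin_lab_o (a := a), gbin_lab_o, gbin_lab_o]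

lemma isoF_fShuffle (t : Bool) (G H K L : LabGraph) :
    IsoF fShuffle (gbin t (gbin t G H) (gbin t K L)) (gbin t (gbin t G K) (gbin t H L)) := by
  have m : ∀ (G H K L : LabGraph),
      Set.MapsTo fShuffle ↑(gbin t (gbin t G H) (gbin t K L)).verts
        ↑(gbin t (gbin t G K) (gbin t H L)).verts := by
    intro G H K L v hv
    rcases rep_gbin2LL (Finset.mem_coe.1 hv) with
      ⟨a, ha, rfl⟩ | ⟨b, hb, rfl⟩ | ⟨c, hc, rfl⟩ | ⟨d, hd, rfl⟩
    · rw [fShuffle_a]; exact Finset.mem_coe.2 (mem_gbin_even_iff.2 (mem_gbin_even_iff.2 ha))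
    · rw [fShuffle_b]; exact Finset.mem_coe.2 (mem_gbin_odd_iff.2 (mem_gbin_even_iff.2 hb))
    · rw [fShuffle_c]; exact Finset.mem_coe.2 (mem_gbin_even_iff.2 (mem_gbin_odd_iff.2 hc))
    · rw [fShuffle_d]; exact Finset.mem_coe.2 (mem_gbin_odd_iff.2 (mem_gbin_odd_iff.2 hd))
  have li : ∀ (G H K L : LabGraph),
      Set.LeftInvOn fShuffle fShuffle ↑(gbin t (gbin t G H) (gbin t K L)).verts := by
    intro G H K L v hv
    rcases rep_gbin2LL (Finset.mem_coe.1 hv) with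
      ⟨a, ha, rfl⟩ | ⟨b, hb, rfl⟩ | ⟨c, hc, rfl⟩ | ⟨d, hd, rfl⟩
    · rw [fShuffle_a, fShuffle_a]
    · rw [fShuffle_b, fShuffle_c]
    · rw [fShuffle_c, fShuffle_b]
    · rw [fShuffle_d, fShuffle_d]
  refine ⟨Set.InvOn.bijOn ⟨li G H K L, li G K H L⟩ (m G H K L) (m G K H L), ?_, ?_⟩
  · intro u hu v hv
    rcases rep_gbin2LL hu with ⟨a, ha, rfl⟩ | ⟨a, ha, rfl⟩ | ⟨a, ha, rfl⟩ | ⟨a, ha, rfl⟩ <;>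
      rcases rep_gbin2LL hv with ⟨b, hb, rfl⟩ | ⟨b, hb, rfl⟩ | ⟨b, hb, rfl⟩ | ⟨b, hb, rfl⟩ <;>
      simp only [fShuffle_a, fShuffle_b, fShuffle_c, fShuffle_d,
        gbin_R_ee, gbin_R_eo, gbin_R_oe, gbin_R_oo,
        gbin_lt_ee, gbin_lt_eo, gbin_lt_oe, gbin_lt_oo,
        mem_gbin_even_iff, mem_gbin_odd_iff] <;>
      constructor <;> first | tauto | rfl
  · intro v hv
    rcases rep_gbin2LL hv with ⟨a, ha, rfl⟩ | ⟨a, ha, rfl⟩ | ⟨a, ha, rfl⟩ | ⟨a, ha, rfl⟩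
    · rw [fShuffle_a]
      rw [gbin_lab_e (a := 2 * a), gbin_lab_e, gbin_lab_e (a := 2 * a), gbin_lab_e]
    · rw [fShuffle_b]
      rw [gbin_lab_o (a := 2 * a), gbin_lab_e, gbin_lab_e (a := 2 * a + 1), gbin_lab_o]
    · rw [fShuffle_c]
      rw [gbin_lab_e (a := 2 * a + 1), gbin_lab_o, gbin_lab_o (a := 2 * a), gbin_lab_e]
    · rw [fShuffle_d]
      rw [gbin_lab_o (a := 2 * a + 1), gbin_lab_o, gbin_lab_o (a := 2 * a + 1), gbin_lab_o]

/-! #### Lemmas about `gseq (point l) H` -/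

lemma mem_gseqpt {l : GLabel} {H : LabGraph} {v : ℕ} :
    v ∈ (gseq (point l) H).verts ↔ v = 0 ∨ (v % 2 = 1 ∧ v / 2 ∈ H.verts) := by
  show v ∈ (gparr (point l) H).verts ↔ _
  rw [mem_gparr_verts]
  constructor
  · rintro (⟨h0, h1⟩ | h)
    · left
      have : v / 2 = 0 := by simpa [point] using h1
      omega
    · exact Or.inr h
  · rintro (rfl | h)
    · exact Or.inl ⟨by omega, by simp [point]⟩
    · exact Or.inr h

lemma zero_mem_gseqpt {l : GLabel} {H : LabGraph} : 0 ∈ (gseq (point l) H).verts :=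
  mem_gseqpt.2 (Or.inl rfl)

lemma odd_mem_gseqpt_iff {l : GLabel} {H : LabGraph} {b : ℕ} :
    2 * b + 1 ∈ (gseq (point l) H).verts ↔ b ∈ H.verts := by
  rw [mem_gseqpt]
  constructor
  · rintro (h | ⟨_, h⟩)
    · omega
    · have e : (2 * b + 1) / 2 = b := by omega
      rwa [e] at h
  · intro h
    have e : (2 * b + 1) / 2 = b := by omega
    exact Or.inr ⟨by omega, by rwa [e]⟩

lemma gseqpt_R {l : GLabel} {H : LabGraph} {u v : ℕ} :
    (gseq (point l) H).R u v ↔ u % 2 = 1 ∧ v % 2 = 1 ∧ H.R (u / 2) (v / 2) := by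
  show (gparr (point l) H).R u v ↔ _
  constructor
  · rintro (⟨_, _, hp⟩ | ⟨h1, h2, h3⟩)
    · exact absurd hp (by simp [point])
    · exact ⟨h1, h2, h3⟩
  · rintro ⟨h1, h2, h3⟩
    exact Or.inr ⟨h1, h2, h3⟩

lemma gseqpt_R_oo {l : GLabel} {H : LabGraph} {a b : ℕ} :
    (gseq (point l) H).R (2 * a + 1) (2 * b + 1) ↔ H.R a b := by
  rw [gseqpt_R]
  have ea : (2 * a + 1) / 2 = a := by omega
  have eb : (2 * b + 1) / 2 = b := by omega
  rw [ea, eb]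
  constructor
  · rintro ⟨_, _, h⟩; exact h
  · intro h; exact ⟨by omega, by omega, h⟩

lemma gseqpt_R_z {l : GLabel} {H : LabGraph} {v : ℕ} :
    ¬ (gseq (point l) H).R 0 v := by
  rw [gseqpt_R]; omega

lemma gseqpt_R_z' {l : GLabel} {H : LabGraph} {v : ℕ} :
    ¬ (gseq (point l) H).R v 0 := by
  rw [gseqpt_R]; omega

lemma gseqpt_lt {l : GLabel} {H : LabGraph} {u v : ℕ} :
    (gseq (point l) H).lt u v ↔
      (u % 2 = 1 ∧ v % 2 = 1 ∧ H.lt (u / 2) (v / 2)) ∨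
      (u = 0 ∧ v % 2 = 1 ∧ v / 2 ∈ H.verts) := by
  show (gparr (point l) H).lt u v ∨ _ ↔ _
  constructor
  · rintro (h | h)
    · rcases h with ⟨_, _, hp⟩ | ⟨h1, h2, h3⟩
      · exact absurd hp (by simp [point])
      · exact Or.inl ⟨h1, h2, h3⟩
    · obtain ⟨h1, h2, h3, h4⟩ := h
      have : u / 2 = 0 := by simpa [point] using h3
      exact Or.inr ⟨by omega, h2, h4⟩
  · rintro (⟨h1, h2, h3⟩ | ⟨rfl, h2, h3⟩)
    · exact Or.inl (Or.inr ⟨h1, h2, h3⟩)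
    · exact Or.inr ⟨by omega, h2, by simp [point], h3⟩

lemma gseqpt_lt_oo {l : GLabel} {H : LabGraph} {a b : ℕ} :
    (gseq (point l) H).lt (2 * a + 1) (2 * b + 1) ↔ H.lt a b := by
  rw [gseqpt_lt]
  have ea : (2 * a + 1) / 2 = a := by omega
  have eb : (2 * b + 1) / 2 = b := by omega
  rw [ea, eb]
  constructor
  · rintro (⟨_, _, h⟩ | ⟨h, _⟩)
    · exact h
    · omega
  · intro h; exact Or.inl ⟨by omega, by omega, h⟩

lemma gseqpt_lt_zo {l : GLabel} {H : LabGraph} {b : ℕ} :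
    (gseq (point l) H).lt 0 (2 * b + 1) ↔ b ∈ H.verts := by
  rw [gseqpt_lt]
  have eb : (2 * b + 1) / 2 = b := by omega
  rw [eb]
  constructor
  · rintro (⟨h, _⟩ | ⟨_, _, h⟩)
    · omega
    · exact h
  · intro h; exact Or.inr ⟨rfl, by omega, h⟩

lemma gseqpt_lt_x0 {l : GLabel} {H : LabGraph} {u : ℕ} :
    ¬ (gseq (point l) H).lt u 0 := by
  rw [gseqpt_lt]; omega

lemma gseqpt_lab_z {l : GLabel} {H : LabGraph} : (gseq (point l) H).lab 0 = l := rfl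

lemma gseqpt_lab_o {l : GLabel} {H : LabGraph} {a : ℕ} :
    (gseq (point l) H).lab (2 * a + 1) = H.lab a := by
  show (gparr (point l) H).lab (2 * a + 1) = H.lab a
  have pa : (2 * a + 1) % 2 = 1 := by omega
  have ea : (2 * a + 1) / 2 = a := by omega
  show (if (2 * a + 1) % 2 = 0 then _ else H.lab ((2 * a + 1) / 2)) = H.lab a
  rw [if_neg (by omega), ea]

lemma pairMap_id_zero {g : ℕ → ℕ} : pairMap _root_.id g 0 = 0 := by
  unfold pairMap; simp

lemma IsoF.pairMap_gseqpt {g : ℕ → ℕ} {l : GLabel} {H H' : LabGraph}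
    (hg : IsoF g H H') :
    IsoF (pairMap _root_.id g) (gseq (point l) H) (gseq (point l) H') := by
  obtain ⟨⟨gmap, ginj, gsur⟩, gedge, glab⟩ := hg
  have rep : ∀ {v : ℕ}, v ∈ (gseq (point l) H).verts →
      v = 0 ∨ ∃ b ∈ H.verts, v = 2 * b + 1 := by
    intro v hv
    rcases mem_gseqpt.1 hv with h | ⟨h1, h2⟩
    · exact Or.inl h
    · exact Or.inr ⟨v / 2, h2, by omega⟩
  have rep' : ∀ {v : ℕ}, v ∈ (gseq (point l) H').verts →
      v = 0 ∨ ∃ b ∈ H'.verts, v = 2 * b + 1 := by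
    intro v hv
    rcases mem_gseqpt.1 hv with h | ⟨h1, h2⟩
    · exact Or.inl h
    · exact Or.inr ⟨v / 2, h2, by omega⟩
  refine ⟨⟨?_, ?_, ?_⟩, ?_, ?_⟩
  · intro v hv
    rcases rep (Finset.mem_coe.1 hv) with rfl | ⟨b, hb, rfl⟩
    · rw [pairMap_id_zero]; exact Finset.mem_coe.2 zero_mem_gseqpt
    · rw [pairMap_o]; exact Finset.mem_coe.2 (odd_mem_gseqpt_iff.2 (Finset.mem_coe.1 (gmap (Finset.mem_coe.2 hb))))
  · intro u hu v hv heq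
    rcases rep (Finset.mem_coe.1 hu) with rfl | ⟨a, ha, rfl⟩ <;>
      rcases rep (Finset.mem_coe.1 hv) with rfl | ⟨b, hb, rfl⟩
    · rfl
    · rw [pairMap_id_zero, pairMap_o] at heq; omega
    · rw [pairMap_id_zero, pairMap_o] at heq; omega
    · rw [pairMap_o, pairMap_o] at heq
      have : g a = g b := by omega
      have : a = b := ginj (Finset.mem_coe.2 ha) (Finset.mem_coe.2 hb) this
      omega
  · intro w hw
    rcases rep' (Finset.mem_coe.1 hw) with rfl | ⟨b, hb, rfl⟩
    · exact ⟨0, Finset.mem_coe.2 zero_mem_gseqpt, pairMap_id_zero⟩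
    · obtain ⟨x, hx, hgx⟩ := gsur (Finset.mem_coe.2 hb)
      refine ⟨2 * x + 1, Finset.mem_coe.2 (odd_mem_gseqpt_iff.2 (Finset.mem_coe.1 hx)), ?_⟩
      rw [pairMap_o, hgx]
  · intro u hu v hv
    rcases rep hu with rfl | ⟨a, ha, rfl⟩ <;> rcases rep hv with rfl | ⟨b, hb, rfl⟩
    · rw [pairMap_id_zero]
      exact ⟨iff_of_false gseqpt_R_z gseqpt_R_z, iff_of_false gseqpt_lt_x0 gseqpt_lt_x0⟩
    · rw [pairMap_id_zero, pairMap_o]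
      refine ⟨iff_of_false gseqpt_R_z gseqpt_R_z, ?_⟩
      rw [gseqpt_lt_zo, gseqpt_lt_zo]
      exact ⟨fun _ => Finset.mem_coe.1 (gmap (Finset.mem_coe.2 hb)), fun _ => hb⟩
    · rw [pairMap_id_zero, pairMap_o]
      refine ⟨iff_of_false gseqpt_R_z' gseqpt_R_z', ?_⟩
      exact iff_of_false gseqpt_lt_x0 gseqpt_lt_x0
    · rw [pairMap_o, pairMap_o]
      rw [gseqpt_R_oo, gseqpt_R_oo, gseqpt_lt_oo, gseqpt_lt_oo]
      exact gedge a ha b hb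
  · intro v hv
    rcases rep hv with rfl | ⟨a, ha, rfl⟩
    · rw [pairMap_id_zero, gseqpt_lab_z, gseqpt_lab_z]
    · rw [pairMap_o, gseqpt_lab_o, gseqpt_lab_o]
      exact glab a ha

/-! #### Roots -/

def IsRoot (G : LabGraph) (r : ℕ) : Prop :=
  r ∈ G.verts ∧ ∀ v ∈ G.verts, v ≠ r → G.lt r v

lemma isRoot_gseqpt {l : GLabel} {H : LabGraph} : IsRoot (gseq (point l) H) 0 := by
  refine ⟨zero_mem_gseqpt, ?_⟩
  intro v hv hne
  rcases mem_gseqpt.1 hv with rfl | ⟨h1, h2⟩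
  · exact absurd rfl hne
  · have e : v = 2 * (v / 2) + 1 := by omega
    rw [e]
    exact gseqpt_lt_zo.2 h2

lemma isRoot_gseqpt_unique {l : GLabel} {H : LabGraph} {r : ℕ}
    (h : IsRoot (gseq (point l) H) r) : r = 0 := by
  by_contra hne
  exact gseqpt_lt_x0 (h.2 0 zero_mem_gseqpt (fun h0 => hne h0.symm))

lemma IsRoot.transport {f : ℕ → ℕ} {G H : LabGraph} (hf : IsoF f G H) {r : ℕ}
    (hr : IsRoot G r) : IsRoot H (f r) := by
  obtain ⟨hbij, hedge, hlab⟩ := hf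
  refine ⟨hbij.mapsTo hr.1, ?_⟩
  intro v hv hne
  obtain ⟨u, hu, rfl⟩ := hbij.surjOn (Finset.mem_coe.2 hv)
  have hur : u ≠ r := fun h => hne (by rw [h])
  exact (hedge r hr.1 u (Finset.mem_coe.1 hu)).2.1 (hr.2 u (Finset.mem_coe.1 hu) hur)

lemma no_root_gbin {t : Bool} {G H : LabGraph}
    (hG : G.verts.Nonempty) (hH : H.verts.Nonempty) {r : ℕ} :
    ¬ IsRoot (gbin t G H) r := by
  rintro ⟨hr, hlt⟩
  rcases rep_gbin hr with ⟨a, ha, rfl⟩ | ⟨a, ha, rfl⟩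
  · obtain ⟨b, hb⟩ := hH
    exact gbin_lt_eo.1 (hlt (2 * b + 1) (mem_gbin_odd_iff.2 hb) (by omega))
  · obtain ⟨b, hb⟩ := hG
    exact gbin_lt_oe.1 (hlt (2 * b) (mem_gbin_even_iff.2 hb) (by omega))

/-! #### Leaves -/

lemma mem_point {l : GLabel} {v : ℕ} : v ∈ (point l).verts ↔ v = 0 := by
  simp [point]

lemma iso_point_unique {f : ℕ → ℕ} {l : GLabel} {H : LabGraph} (hf : IsoF f (point l) H) :
    ∀ u ∈ H.verts, ∀ v ∈ H.verts, u = v := by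
  intro u hu v hv
  obtain ⟨a, ha, rfl⟩ := hf.1.surjOn (Finset.mem_coe.2 hu)
  obtain ⟨b, hb, rfl⟩ := hf.1.surjOn (Finset.mem_coe.2 hv)
  have ha0 : a = 0 := mem_point.1 (Finset.mem_coe.1 ha)
  have hb0 : b = 0 := mem_point.1 (Finset.mem_coe.1 hb)
  rw [ha0, hb0]

lemma iso_point_point {f : ℕ → ℕ} {l l' : GLabel} (hf : IsoF f (point l) (point l')) :
    l = l' := by
  have h0 : f 0 ∈ (point l').verts := hf.1.mapsTo (Finset.mem_coe.2 (mem_point.2 rfl))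
  have := hf.2.2 0 (mem_point.2 rfl)
  rw [show (point l').lab (f 0) = l' from rfl] at this
  rw [show (point l).lab 0 = l from rfl] at this
  exact this.symm

/-! #### Backward direction: AC-equivalence implies isomorphism -/

theorem aceq_to_iso {F F' : Formula} (h : ACEq F F') : Iso (trans F) (trans F') := by
  induction h with
  | refl A => exact Iso.refl' _
  | symm _ ih => exact ih.symm'
  | trans _ _ ih1 ih2 => exact ih1.trans' ih2
  | tensAssoc A B C => exact ⟨fAssoc, isoF_fAssoc true (trans A) (trans B) (trans C)⟩
  | parrAssoc A B C => exact ⟨fAssoc, isoF_fAssoc false (trans A) (trans B) (trans C)⟩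
  | tensComm A B => exact ⟨fComm, isoF_fComm true (trans A) (trans B)⟩
  | parrComm A B => exact ⟨fComm, isoF_fComm false (trans A) (trans B)⟩
  | tensCongr _ _ ih1 ih2 =>
      obtain ⟨f, hf⟩ := iso_def.1 ih1
      obtain ⟨g, hg⟩ := iso_def.1 ih2
      exact ⟨pairMap f g, hf.pairMap_gbin (t := true) hg⟩
  | parrCongr _ _ ih1 ih2 =>
      obtain ⟨f, hf⟩ := iso_def.1 ih1
      obtain ⟨g, hg⟩ := iso_def.1 ih2
      exact ⟨pairMap f g, hf.pairMap_gbin (t := false) hg⟩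
  | bangCongr _ ih =>
      obtain ⟨g, hg⟩ := iso_def.1 ih
      exact ⟨pairMap _root_.id g, hg.pairMap_gseqpt⟩
  | questCongr _ ih =>
      obtain ⟨g, hg⟩ := iso_def.1 ih
      exact ⟨pairMap _root_.id g, hg.pairMap_gseqpt⟩

/-! #### Connectivity and co-connectivity -/

/-- Adjacency: for `t = false` ordinary adjacency (for ⅋-splitting), for `t = true`
co-adjacency in the `R`-graph (for ⊗-splitting). -/
def XAdj : Bool → LabGraph → ℕ → ℕ → Prop
  | true, G, u, v => u ≠ v ∧ ¬ G.R u v ∧ ¬ G.R v u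
  | false, G, u, v => G.R u v ∨ G.R v u ∨ G.lt u v ∨ G.lt v u

def XStep (t : Bool) (G : LabGraph) (u v : ℕ) : Prop :=
  u ∈ G.verts ∧ v ∈ G.verts ∧ XAdj t G u v

def XReach (t : Bool) (G : LabGraph) : ℕ → ℕ → Prop :=
  Relation.ReflTransGen (XStep t G)

def XConn (t : Bool) (G : LabGraph) : Prop :=
  ∀ u ∈ G.verts, ∀ v ∈ G.verts, XReach t G u v

def XClosed (t : Bool) (G : LabGraph) (S : Set ℕ) : Prop :=
  ∀ u ∈ S, ∀ v ∈ G.verts, v ∉ S → ¬ XAdj t G u v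

lemma XClosed.reach {t : Bool} {G : LabGraph} {S : Set ℕ} (hcl : XClosed t G S)
    {u v : ℕ} (hu : u ∈ S) (h : XReach t G u v) : v ∈ S := by
  induction h with
  | refl => exact hu
  | tail h1 h2 ih =>
      by_contra hv
      exact hcl _ ih _ h2.2.1 hv h2.2.2

lemma XAdj.transport {t : Bool} {f : ℕ → ℕ} {G H : LabGraph} (hf : IsoF f G H)
    {u v : ℕ} (hu : u ∈ G.verts) (hv : v ∈ G.verts) :
    XAdj t G u v ↔ XAdj t H (f u) (f v) := by
  have h1 := (hf.2.1 u hu v hv).1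
  have h2 := (hf.2.1 u hu v hv).2
  have h3 := (hf.2.1 v hv u hu).1
  have h4 := (hf.2.1 v hv u hu).2
  cases t
  · show (G.R u v ∨ G.R v u ∨ G.lt u v ∨ G.lt v u) ↔ _
    rw [h1, h2, h3, h4]
    exact Iff.rfl
  · show (u ≠ v ∧ ¬ G.R u v ∧ ¬ G.R v u) ↔ _
    rw [h1, h3]
    have : u ≠ v ↔ f u ≠ f v := by
      constructor
      · intro hne heq
        exact hne (hf.1.injOn (Finset.mem_coe.2 hu) (Finset.mem_coe.2 hv) heq)
      · intro hne heq
        exact hne (by rw [heq])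
    rw [this]
    exact Iff.rfl

lemma xadj_even {t : Bool} {G H : LabGraph} {a b : ℕ}
    (ha : a ∈ G.verts) (hb : b ∈ G.verts) :
    XAdj t (gbin t G H) (2 * a) (2 * b) ↔ XAdj t G a b := by
  cases t
  · show ((gbin false G H).R _ _ ∨ _ ∨ _ ∨ _) ↔ _
    rw [gbin_R_ee, gbin_R_ee, gbin_lt_ee, gbin_lt_ee]
    exact Iff.rfl
  · show (2 * a ≠ 2 * b ∧ ¬ (gbin true G H).R _ _ ∧ ¬ (gbin true G H).R _ _) ↔ _
    rw [gbin_R_ee, gbin_R_ee]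
    have : 2 * a ≠ 2 * b ↔ a ≠ b := by omega
    rw [this]
    exact Iff.rfl

lemma xadj_odd {t : Bool} {G H : LabGraph} {a b : ℕ}
    (ha : a ∈ H.verts) (hb : b ∈ H.verts) :
    XAdj t (gbin t G H) (2 * a + 1) (2 * b + 1) ↔ XAdj t H a b := by
  cases t
  · show ((gbin false G H).R _ _ ∨ _ ∨ _ ∨ _) ↔ _
    rw [gbin_R_oo, gbin_R_oo, gbin_lt_oo, gbin_lt_oo]
    exact Iff.rfl
  · show (2 * a + 1 ≠ 2 * b + 1 ∧ _ ∧ _) ↔ _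
    rw [gbin_R_oo, gbin_R_oo]
    have : 2 * a + 1 ≠ 2 * b + 1 ↔ a ≠ b := by omega
    rw [this]
    exact Iff.rfl

lemma xadj_cross_false {t : Bool} {G H : LabGraph} {a b : ℕ}
    (ha : a ∈ G.verts) (hb : b ∈ H.verts) :
    ¬ XAdj t (gbin t G H) (2 * a) (2 * b + 1) := by
  cases t
  · rintro (h | h | h | h)
    · exact Bool.false_ne_true ((gbin_R_eo (t := false)).1 h).1
    · exact Bool.false_ne_true ((gbin_R_oe (t := false)).1 h).1
    · exact (gbin_lt_eo.1 h)
    · exact (gbin_lt_oe.1 h)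
  · rintro ⟨hne, hR, _⟩
    exact hR (gbin_R_eo.2 ⟨rfl, ha, hb⟩)

lemma xadj_cross_false' {t : Bool} {G H : LabGraph} {a b : ℕ}
    (ha : a ∈ G.verts) (hb : b ∈ H.verts) :
    ¬ XAdj t (gbin t G H) (2 * b + 1) (2 * a) := by
  cases t
  · rintro (h | h | h | h)
    · exact Bool.false_ne_true ((gbin_R_oe (t := false)).1 h).1
    · exact Bool.false_ne_true ((gbin_R_eo (t := false)).1 h).1
    · exact (gbin_lt_oe.1 h)
    · exact (gbin_lt_eo.1 h)
  · rintro ⟨hne, hR, _⟩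
    exact hR (gbin_R_oe.2 ⟨rfl, hb, ha⟩)

/-- Cross-adjacent bipartite structure implies `X`-connectivity. -/
lemma xconn_of_cross {t s : Bool} {G H : LabGraph}
    (hG : G.verts.Nonempty) (hH : H.verts.Nonempty)
    (hcr : ∀ a ∈ G.verts, ∀ b ∈ H.verts,
      XAdj t (gbin s G H) (2 * a) (2 * b + 1) ∧ XAdj t (gbin s G H) (2 * b + 1) (2 * a)) :
    XConn t (gbin s G H) := by
  intro u hu v hv
  have step1 : ∀ a ∈ G.verts, ∀ b ∈ H.verts, XStep t (gbin s G H) (2 * a) (2 * b + 1) :=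
    fun a ha b hb => ⟨mem_gbin_even_iff.2 ha, mem_gbin_odd_iff.2 hb, (hcr a ha b hb).1⟩
  have step2 : ∀ a ∈ G.verts, ∀ b ∈ H.verts, XStep t (gbin s G H) (2 * b + 1) (2 * a) :=
    fun a ha b hb => ⟨mem_gbin_odd_iff.2 hb, mem_gbin_even_iff.2 ha, (hcr a ha b hb).2⟩
  rcases rep_gbin hu with ⟨a, ha, rfl⟩ | ⟨b, hb, rfl⟩ <;>
    rcases rep_gbin hv with ⟨a', ha', rfl⟩ | ⟨b', hb', rfl⟩
  · obtain ⟨c, hc⟩ := hH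
    exact Relation.ReflTransGen.head (step1 a ha c hc)
      (Relation.ReflTransGen.single (step2 a' ha' c hc))
  · exact Relation.ReflTransGen.single (step1 a ha b' hb')
  · exact Relation.ReflTransGen.single (step2 a' ha' b hb)
  · obtain ⟨c, hc⟩ := hG
    exact Relation.ReflTransGen.head (step2 c hc b hb)
      (Relation.ReflTransGen.single (step1 c hc b' hb'))

lemma xconn_gseqpt {t : Bool} {l : GLabel} {H : LabGraph} :
    XConn t (gseq (point l) H) := by
  have hub1 : ∀ b ∈ H.verts, XAdj t (gseq (point l) H) 0 (2 * b + 1) := by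
    intro b hb
    cases t
    · exact Or.inr (Or.inr (Or.inl (gseqpt_lt_zo.2 hb)))
    · exact ⟨by omega, gseqpt_R_z, gseqpt_R_z'⟩
  have hub2 : ∀ b ∈ H.verts, XAdj t (gseq (point l) H) (2 * b + 1) 0 := by
    intro b hb
    cases t
    · exact Or.inr (Or.inr (Or.inr (gseqpt_lt_zo.2 hb)))
    · exact ⟨by omega, gseqpt_R_z', gseqpt_R_z⟩
  have s1 : ∀ b ∈ H.verts, XStep t (gseq (point l) H) 0 (2 * b + 1) :=
    fun b hb => ⟨zero_mem_gseqpt, odd_mem_gseqpt_iff.2 hb, hub1 b hb⟩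
  have s2 : ∀ b ∈ H.verts, XStep t (gseq (point l) H) (2 * b + 1) 0 :=
    fun b hb => ⟨odd_mem_gseqpt_iff.2 hb, zero_mem_gseqpt, hub2 b hb⟩
  have rep : ∀ {v : ℕ}, v ∈ (gseq (point l) H).verts →
      v = 0 ∨ ∃ b ∈ H.verts, v = 2 * b + 1 := by
    intro v hv
    rcases mem_gseqpt.1 hv with h | ⟨h1, h2⟩
    · exact Or.inl h
    · exact Or.inr ⟨v / 2, h2, by omega⟩
  intro u hu v hv
  rcases rep hu with rfl | ⟨b, hb, rfl⟩ <;> rcases rep hv with rfl | ⟨b', hb', rfl⟩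
  · exact Relation.ReflTransGen.refl
  · exact Relation.ReflTransGen.single (s1 b' hb')
  · exact Relation.ReflTransGen.single (s2 b hb)
  · exact Relation.ReflTransGen.head (s2 b hb) (Relation.ReflTransGen.single (s1 b' hb'))

lemma xconn_trans {t : Bool} {F : Formula}
    (hF : ∀ A B, F ≠ fbin t A B) : XConn t (trans F) := by
  cases F with
  | atom a =>
      intro u hu v hv
      rw [mem_point.1 hu, mem_point.1 hv]
      exact Relation.ReflTransGen.refl
  | natom a =>
      intro u hu v hv
      rw [mem_point.1 hu, mem_point.1 hv]
      exact Relation.ReflTransGen.refl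
  | bot =>
      intro u hu v hv
      rw [mem_point.1 hu, mem_point.1 hv]
      exact Relation.ReflTransGen.refl
  | one =>
      intro u hu v hv
      rw [mem_point.1 hu, mem_point.1 hv]
      exact Relation.ReflTransGen.refl
  | hole =>
      intro u hu v hv
      rw [mem_point.1 hu, mem_point.1 hv]
      exact Relation.ReflTransGen.refl
  | bang A => exact xconn_gseqpt
  | quest A => exact xconn_gseqpt
  | parr A B =>
      cases t with
      | false => exact absurd rfl (hF A B)
      | true =>
          show XConn true (gbin false (trans A) (trans B))
          refine xconn_of_cross (trans_verts_nonempty A) (trans_verts_nonempty B) ?_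
          intro a ha b hb
          constructor
          · exact ⟨by omega,
              fun h => Bool.false_ne_true ((gbin_R_eo (t := false)).1 h).1,
              fun h => Bool.false_ne_true ((gbin_R_oe (t := false)).1 h).1⟩
          · exact ⟨by omega,
              fun h => Bool.false_ne_true ((gbin_R_oe (t := false)).1 h).1,
              fun h => Bool.false_ne_true ((gbin_R_eo (t := false)).1 h).1⟩
  | tens A B =>
      cases t with
      | true => exact absurd rfl (hF A B)
      | false =>
          show XConn false (gbin true (trans A) (trans B))
          refine xconn_of_cross (trans_verts_nonempty A) (trans_verts_nonempty B) ?_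
          intro a ha b hb
          constructor
          · exact Or.inl (gbin_R_eo.2 ⟨rfl, ha, hb⟩)
          · exact Or.inl (gbin_R_oe.2 ⟨rfl, hb, ha⟩)

/-! #### AC helpers -/

lemma acBinAssoc (t : Bool) (a b c : Formula) :
    ACEq (fbin t (fbin t a b) c) (fbin t a (fbin t b c)) := by
  cases t
  · exact ACEq.parrAssoc a b c
  · exact ACEq.tensAssoc a b c

lemma acBinComm (t : Bool) (a b : Formula) : ACEq (fbin t a b) (fbin t b a) := by
  cases t
  · exact ACEq.parrComm a b
  · exact ACEq.tensComm a b

lemma acBinCongr {t : Bool} {a a' b b' : Formula} (h1 : ACEq a a') (h2 : ACEq b b') :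
    ACEq (fbin t a b) (fbin t a' b') := by
  cases t
  · exact ACEq.parrCongr h1 h2
  · exact ACEq.tensCongr h1 h2

lemma acShuffle (t : Bool) (a b c d : Formula) :
    ACEq (fbin t (fbin t a b) (fbin t c d)) (fbin t (fbin t a c) (fbin t b d)) := by
  have h1 : ACEq (fbin t (fbin t a b) (fbin t c d)) (fbin t a (fbin t b (fbin t c d))) :=
    acBinAssoc t a b (fbin t c d)
  have h2 : ACEq (fbin t b (fbin t c d)) (fbin t c (fbin t b d)) := by
    have e1 : ACEq (fbin t b (fbin t c d)) (fbin t (fbin t b c) d) :=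
      (acBinAssoc t b c d).symm
    have e2 : ACEq (fbin t (fbin t b c) d) (fbin t (fbin t c b) d) :=
      acBinCongr (acBinComm t b c) (ACEq.refl d)
    have e3 : ACEq (fbin t (fbin t c b) d) (fbin t c (fbin t b d)) := acBinAssoc t c b d
    exact (e1.trans e2).trans e3
  have h3 : ACEq (fbin t a (fbin t b (fbin t c d))) (fbin t a (fbin t c (fbin t b d))) :=
    acBinCongr (ACEq.refl a) h2
  have h4 : ACEq (fbin t a (fbin t c (fbin t b d))) (fbin t (fbin t a c) (fbin t b d)) :=
    (acBinAssoc t a c (fbin t b d)).symm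
  exact (h1.trans h3).trans h4

/-! #### Splitting a parity-preserving isomorphism of binary graphs -/

lemma iso_gbin_split {t : Bool} {G1 G2 H1 H2 : LabGraph} {f : ℕ → ℕ}
    (hf : IsoF f (gbin t G1 G2) (gbin t H1 H2))
    (he : ∀ v ∈ (gbin t G1 G2).verts, v % 2 = 0 → f v % 2 = 0)
    (ho : ∀ v ∈ (gbin t G1 G2).verts, v % 2 = 1 → f v % 2 = 1) :
    Iso G1 H1 ∧ Iso G2 H2 := by
  obtain ⟨⟨fmap, finj, fsur⟩, fedge, flab⟩ := hf
  have keyE : ∀ x ∈ G1.verts, f (2 * x) = 2 * (f (2 * x) / 2) ∧ f (2 * x) / 2 ∈ H1.verts := by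
    intro x hx
    have hm : 2 * x ∈ (gbin t G1 G2).verts := mem_gbin_even_iff.2 hx
    have hp : f (2 * x) % 2 = 0 := he _ hm (by omega)
    have hmem : f (2 * x) ∈ (gbin t H1 H2).verts := Finset.mem_coe.1 (fmap (Finset.mem_coe.2 hm))
    rcases mem_gbin_verts.1 hmem with ⟨_, h1⟩ | ⟨h0, _⟩
    · exact ⟨by omega, h1⟩
    · omega
  have keyO : ∀ x ∈ G2.verts,
      f (2 * x + 1) = 2 * (f (2 * x + 1) / 2) + 1 ∧ f (2 * x + 1) / 2 ∈ H2.verts := by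
    intro x hx
    have hm : 2 * x + 1 ∈ (gbin t G1 G2).verts := mem_gbin_odd_iff.2 hx
    have hp : f (2 * x + 1) % 2 = 1 := ho _ hm (by omega)
    have hmem : f (2 * x + 1) ∈ (gbin t H1 H2).verts :=
      Finset.mem_coe.1 (fmap (Finset.mem_coe.2 hm))
    rcases mem_gbin_verts.1 hmem with ⟨h0, _⟩ | ⟨_, h1⟩
    · omega
    · exact ⟨by omega, h1⟩
  constructor
  · refine ⟨fun x => f (2 * x) / 2, ⟨?_, ?_, ?_⟩, ?_, ?_⟩
    · intro x hx
      exact Finset.mem_coe.2 (keyE x (Finset.mem_coe.1 hx)).2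
    · intro x hx y hy heq
      have ex := (keyE x (Finset.mem_coe.1 hx)).1
      have ey := (keyE y (Finset.mem_coe.1 hy)).1
      have heq' : f (2 * x) / 2 = f (2 * y) / 2 := heq
      have : f (2 * x) = f (2 * y) := by omega
      have := finj (Finset.mem_coe.2 (mem_gbin_even_iff.2 (Finset.mem_coe.1 hx)))
        (Finset.mem_coe.2 (mem_gbin_even_iff.2 (Finset.mem_coe.1 hy))) this
      omega
    · intro w hw
      have hm : 2 * w ∈ (gbin t H1 H2).verts := mem_gbin_even_iff.2 (Finset.mem_coe.1 hw)
      obtain ⟨u, hu, hu2⟩ := fsur (Finset.mem_coe.2 hm)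
      rcases rep_gbin (Finset.mem_coe.1 hu) with ⟨x, hx, rfl⟩ | ⟨x, hx, rfl⟩
      · refine ⟨x, Finset.mem_coe.2 hx, ?_⟩
        simp only [hu2]
        omega
      · have := ho _ (Finset.mem_coe.1 hu) (by omega)
        rw [hu2] at this
        omega
    · intro x hx y hy
      have ex := (keyE x hx).1
      have ey := (keyE y hy).1
      have key := fedge (2 * x) (mem_gbin_even_iff.2 hx) (2 * y) (mem_gbin_even_iff.2 hy)
      rw [ex, ey] at key
      rw [gbin_R_ee, gbin_R_ee, gbin_lt_ee, gbin_lt_ee] at key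
      exact key
    · intro x hx
      have ex := (keyE x hx).1
      have key := flab (2 * x) (mem_gbin_even_iff.2 hx)
      rw [ex] at key
      rw [gbin_lab_e, gbin_lab_e] at key
      exact key
  · refine ⟨fun x => f (2 * x + 1) / 2, ⟨?_, ?_, ?_⟩, ?_, ?_⟩
    · intro x hx
      exact Finset.mem_coe.2 (keyO x (Finset.mem_coe.1 hx)).2
    · intro x hx y hy heq
      have ex := (keyO x (Finset.mem_coe.1 hx)).1
      have ey := (keyO y (Finset.mem_coe.1 hy)).1
      have heq' : f (2 * x + 1) / 2 = f (2 * y + 1) / 2 := heq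
      have : f (2 * x + 1) = f (2 * y + 1) := by omega
      have := finj (Finset.mem_coe.2 (mem_gbin_odd_iff.2 (Finset.mem_coe.1 hx)))
        (Finset.mem_coe.2 (mem_gbin_odd_iff.2 (Finset.mem_coe.1 hy))) this
      omega
    · intro w hw
      have hm : 2 * w + 1 ∈ (gbin t H1 H2).verts := mem_gbin_odd_iff.2 (Finset.mem_coe.1 hw)
      obtain ⟨u, hu, hu2⟩ := fsur (Finset.mem_coe.2 hm)
      rcases rep_gbin (Finset.mem_coe.1 hu) with ⟨x, hx, rfl⟩ | ⟨x, hx, rfl⟩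
      · have := he _ (Finset.mem_coe.1 hu) (by omega)
        rw [hu2] at this
        omega
      · refine ⟨x, Finset.mem_coe.2 hx, ?_⟩
        simp only [hu2]
        omega
    · intro x hx y hy
      have ex := (keyO x hx).1
      have ey := (keyO y hy).1
      have key := fedge (2 * x + 1) (mem_gbin_odd_iff.2 hx) (2 * y + 1) (mem_gbin_odd_iff.2 hy)
      rw [ex, ey] at key
      rw [gbin_R_oo, gbin_R_oo, gbin_lt_oo, gbin_lt_oo] at key
      exact key
    · intro x hx
      have ex := (keyO x hx).1
      have key := flab (2 * x + 1) (mem_gbin_odd_iff.2 hx)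
      rw [ex] at key
      rw [gbin_lab_o, gbin_lab_o] at key
      exact key

/-! #### The splitting theorem -/

lemma xsplit_bin (t : Bool) (A B : Formula)
    (ihA : ∀ S : Set ℕ, (∀ v ∈ S, v ∈ (trans A).verts) → S.Nonempty →
      (∃ v ∈ (trans A).verts, v ∉ S) → XClosed t (trans A) S →
      ∃ (B' C' : Formula) (h : ℕ → ℕ), ACEq A (fbin t B' C') ∧
        IsoF h (trans A) (gbin t (trans B') (trans C')) ∧
        (∀ v ∈ S, h v % 2 = 0) ∧ (∀ v ∈ (trans A).verts, v ∉ S → h v % 2 = 1))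
    (ihB : ∀ S : Set ℕ, (∀ v ∈ S, v ∈ (trans B).verts) → S.Nonempty →
      (∃ v ∈ (trans B).verts, v ∉ S) → XClosed t (trans B) S →
      ∃ (B' C' : Formula) (h : ℕ → ℕ), ACEq B (fbin t B' C') ∧
        IsoF h (trans B) (gbin t (trans B') (trans C')) ∧
        (∀ v ∈ S, h v % 2 = 0) ∧ (∀ v ∈ (trans B).verts, v ∉ S → h v % 2 = 1))
    (S : Set ℕ)
    (hS : ∀ v ∈ S, v ∈ (gbin t (trans A) (trans B)).verts)
    (hne : S.Nonempty)
    (hne' : ∃ v ∈ (gbin t (trans A) (trans B)).verts, v ∉ S)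
    (hcl : XClosed t (gbin t (trans A) (trans B)) S) :
    ∃ (B' C' : Formula) (h : ℕ → ℕ), ACEq (fbin t A B) (fbin t B' C') ∧
      IsoF h (gbin t (trans A) (trans B)) (gbin t (trans B') (trans C')) ∧
      (∀ v ∈ S, h v % 2 = 0) ∧
      (∀ v ∈ (gbin t (trans A) (trans B)).verts, v ∉ S → h v % 2 = 1) := by
  classical
  set SA : Set ℕ := {x | 2 * x ∈ S} with hSAdef
  set SB : Set ℕ := {x | 2 * x + 1 ∈ S} with hSBdef
  have hSA : ∀ x ∈ SA, x ∈ (trans A).verts := fun x hx => mem_gbin_even_iff.1 (hS _ hx)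
  have hSB : ∀ x ∈ SB, x ∈ (trans B).verts := fun x hx => mem_gbin_odd_iff.1 (hS _ hx)
  have hclA : XClosed t (trans A) SA := by
    intro u hu v hv hvS hadj
    exact hcl _ hu _ (mem_gbin_even_iff.2 hv) hvS ((xadj_even (hSA u hu) hv).2 hadj)
  have hclB : XClosed t (trans B) SB := by
    intro u hu v hv hvS hadj
    exact hcl _ hu _ (mem_gbin_odd_iff.2 hv) hvS ((xadj_odd (hSB u hu) hv).2 hadj)
  rcases Set.eq_empty_or_nonempty SA with hA0 | hAne
  · rcases Set.eq_empty_or_nonempty SB with hB0 | hBne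
    · -- S is empty: contradiction
      obtain ⟨v, hv⟩ := hne
      rcases rep_gbin (hS v hv) with ⟨a, ha, rfl⟩ | ⟨b, hb, rfl⟩
      · have : a ∈ SA := hv
        rw [hA0] at this
        exact this.elim
      · have : b ∈ SB := hv
        rw [hB0] at this
        exact this.elim
    · by_cases hBfull : ∀ x ∈ (trans B).verts, x ∈ SB
      · -- S = odd part: commutativity
        refine ⟨B, A, fComm, acBinComm t A B, isoF_fComm t (trans A) (trans B), ?_, ?_⟩
        · intro v hv
          rcases rep_gbin (hS v hv) with ⟨a, ha, rfl⟩ | ⟨b, hb, rfl⟩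
          · have : a ∈ SA := hv
            rw [hA0] at this
            exact this.elim
          · rw [fComm_o]
            omega
        · intro v hv hvS
          rcases rep_gbin hv with ⟨a, ha, rfl⟩ | ⟨b, hb, rfl⟩
          · rw [fComm_e]
            omega
          · exact absurd (hBfull b hb) hvS
      · -- SA empty, SB proper
        push_neg at hBfull
        obtain ⟨B1, B2, k, hac, hiso, htr0, htr1⟩ := ihB SB hSB hBne hBfull hclB
        refine ⟨B1, fbin t B2 A, fAssoc ∘ (fComm ∘ pairMap _root_.id k), ?_, ?_, ?_, ?_⟩
        · have e1 : ACEq (fbin t A B) (fbin t A (fbin t B1 B2)) :=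
            acBinCongr (ACEq.refl A) hac
          have e2 : ACEq (fbin t A (fbin t B1 B2)) (fbin t (fbin t B1 B2) A) :=
            acBinComm t A (fbin t B1 B2)
          have e3 : ACEq (fbin t (fbin t B1 B2) A) (fbin t B1 (fbin t B2 A)) :=
            acBinAssoc t B1 B2 A
          exact (e1.trans e2).trans e3
        · rw [trans_fbin]
          exact (((IsoF.id (trans A)).pairMap_gbin hiso).comp
            (isoF_fComm t (trans A) (gbin t (trans B1) (trans B2)))).comp
            (isoF_fAssoc t (trans B1) (trans B2) (trans A))
        · intro v hv
          rcases rep_gbin (hS v hv) with ⟨a, ha, rfl⟩ | ⟨b, hb, rfl⟩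
          · have : a ∈ SA := hv
            rw [hA0] at this
            exact this.elim
          · have hbS : b ∈ SB := hv
            obtain ⟨m, hm⟩ : ∃ m, k b = 2 * m := ⟨k b / 2, by have := htr0 b hbS; omega⟩
            show (fAssoc (fComm (pairMap _root_.id k (2 * b + 1)))) % 2 = 0
            rw [pairMap_o, hm, fComm_o, fAssoc_0]
            omega
        · intro v hv hvS
          rcases rep_gbin hv with ⟨a, ha, rfl⟩ | ⟨b, hb, rfl⟩
          · show (fAssoc (fComm (pairMap _root_.id k (2 * a)))) % 2 = 1
            rw [pairMap_e]
            show (fAssoc (fComm (2 * a))) % 2 = 1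
            rw [fComm_e, fAssoc_1]
            omega
          · have hbS : b ∉ SB := hvS
            obtain ⟨m, hm⟩ : ∃ m, k b = 2 * m + 1 := ⟨k b / 2, by have := htr1 b hb hbS; omega⟩
            show (fAssoc (fComm (pairMap _root_.id k (2 * b + 1)))) % 2 = 1
            rw [pairMap_o, hm, fComm_o, fAssoc_2]
            omega
  · by_cases hAfull : ∀ x ∈ (trans A).verts, x ∈ SA
    · by_cases hBfull : ∀ x ∈ (trans B).verts, x ∈ SB
      · -- S is everything: contradiction
        obtain ⟨v, hv, hvS⟩ := hne'
        rcases rep_gbin hv with ⟨a, ha, rfl⟩ | ⟨b, hb, rfl⟩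
        · exact absurd (hAfull a ha) hvS
        · exact absurd (hBfull b hb) hvS
      · rcases Set.eq_empty_or_nonempty SB with hB0 | hBne
        · -- S = even part: identity
          refine ⟨A, B, _root_.id, ACEq.refl _, IsoF.id _, ?_, ?_⟩
          · intro v hv
            rcases rep_gbin (hS v hv) with ⟨a, ha, rfl⟩ | ⟨b, hb, rfl⟩
            · show (2 * a) % 2 = 0
              omega
            · have : b ∈ SB := hv
              rw [hB0] at this
              exact this.elim
          · intro v hv hvS
            rcases rep_gbin hv with ⟨a, ha, rfl⟩ | ⟨b, hb, rfl⟩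
            · exact absurd (hAfull a ha) hvS
            · show (2 * b + 1) % 2 = 1
              omega
        · -- SA full, SB proper
          push_neg at hBfull
          obtain ⟨B1, B2, k, hac, hiso, htr0, htr1⟩ := ihB SB hSB hBne hBfull hclB
          refine ⟨fbin t A B1, B2, gAssoc ∘ pairMap _root_.id k, ?_, ?_, ?_, ?_⟩
          · have e1 : ACEq (fbin t A B) (fbin t A (fbin t B1 B2)) :=
              acBinCongr (ACEq.refl A) hac
            have e2 : ACEq (fbin t A (fbin t B1 B2)) (fbin t (fbin t A B1) B2) :=
              (acBinAssoc t A B1 B2).symm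
            exact e1.trans e2
          · rw [trans_fbin]
            exact ((IsoF.id (trans A)).pairMap_gbin hiso).comp
              (isoF_gAssoc t (trans A) (trans B1) (trans B2))
          · intro v hv
            rcases rep_gbin (hS v hv) with ⟨a, ha, rfl⟩ | ⟨b, hb, rfl⟩
            · show (gAssoc (pairMap _root_.id k (2 * a))) % 2 = 0
              rw [pairMap_e]
              show (gAssoc (2 * a)) % 2 = 0
              rw [gAssoc_e]
              omega
            · have hbS : b ∈ SB := hv
              obtain ⟨m, hm⟩ : ∃ m, k b = 2 * m := ⟨k b / 2, by have := htr0 b hbS; omega⟩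
              show (gAssoc (pairMap _root_.id k (2 * b + 1))) % 2 = 0
              rw [pairMap_o, hm, gAssoc_1]
              omega
          · intro v hv hvS
            rcases rep_gbin hv with ⟨a, ha, rfl⟩ | ⟨b, hb, rfl⟩
            · exact absurd (hAfull a ha) hvS
            · have hbS : b ∉ SB := hvS
              obtain ⟨m, hm⟩ : ∃ m, k b = 2 * m + 1 := ⟨k b / 2, by have := htr1 b hb hbS; omega⟩
              show (gAssoc (pairMap _root_.id k (2 * b + 1))) % 2 = 1
              rw [pairMap_o, hm, gAssoc_3]
              omega
    · -- SA proper
      push_neg at hAfull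
      obtain ⟨A1, A2, k, hacA, hisoA, htrA0, htrA1⟩ := ihA SA hSA hAne hAfull hclA
      rcases Set.eq_empty_or_nonempty SB with hB0 | hBne
      · -- SA proper, SB empty
        refine ⟨A1, fbin t A2 B, fAssoc ∘ pairMap k _root_.id, ?_, ?_, ?_, ?_⟩
        · have e1 : ACEq (fbin t A B) (fbin t (fbin t A1 A2) B) :=
            acBinCongr hacA (ACEq.refl B)
          have e2 : ACEq (fbin t (fbin t A1 A2) B) (fbin t A1 (fbin t A2 B)) :=
            acBinAssoc t A1 A2 B
          exact e1.trans e2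
        · rw [trans_fbin]
          exact (hisoA.pairMap_gbin (IsoF.id (trans B))).comp
            (isoF_fAssoc t (trans A1) (trans A2) (trans B))
        · intro v hv
          rcases rep_gbin (hS v hv) with ⟨a, ha, rfl⟩ | ⟨b, hb, rfl⟩
          · have haS : a ∈ SA := hv
            obtain ⟨m, hm⟩ : ∃ m, k a = 2 * m := ⟨k a / 2, by have := htrA0 a haS; omega⟩
            show (fAssoc (pairMap k _root_.id (2 * a))) % 2 = 0
            rw [pairMap_e, hm, fAssoc_0]
            omega
          · have : b ∈ SB := hv
            rw [hB0] at this
            exact this.elim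
        · intro v hv hvS
          rcases rep_gbin hv with ⟨a, ha, rfl⟩ | ⟨b, hb, rfl⟩
          · have haS : a ∉ SA := hvS
            obtain ⟨m, hm⟩ : ∃ m, k a = 2 * m + 1 := ⟨k a / 2, by have := htrA1 a ha haS; omega⟩
            show (fAssoc (pairMap k _root_.id (2 * a))) % 2 = 1
            rw [pairMap_e, hm, fAssoc_2]
            omega
          · show (fAssoc (pairMap k _root_.id (2 * b + 1))) % 2 = 1
            rw [pairMap_o]
            show (fAssoc (2 * b + 1)) % 2 = 1
            rw [fAssoc_1]
            omega
      · by_cases hBfull : ∀ x ∈ (trans B).verts, x ∈ SB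
        · -- SA proper, SB full
          refine ⟨fbin t B A1, A2, gAssoc ∘ (fComm ∘ pairMap k _root_.id), ?_, ?_, ?_, ?_⟩
          · have e1 : ACEq (fbin t A B) (fbin t (fbin t A1 A2) B) :=
              acBinCongr hacA (ACEq.refl B)
            have e2 : ACEq (fbin t (fbin t A1 A2) B) (fbin t B (fbin t A1 A2)) :=
              acBinComm t (fbin t A1 A2) B
            have e3 : ACEq (fbin t B (fbin t A1 A2)) (fbin t (fbin t B A1) A2) :=
              (acBinAssoc t B A1 A2).symm
            exact (e1.trans e2).trans e3
          · rw [trans_fbin]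
            exact (((hisoA.pairMap_gbin (IsoF.id (trans B))).comp
              (isoF_fComm t (gbin t (trans A1) (trans A2)) (trans B))).comp
              (isoF_gAssoc t (trans B) (trans A1) (trans A2)))
          · intro v hv
            rcases rep_gbin (hS v hv) with ⟨a, ha, rfl⟩ | ⟨b, hb, rfl⟩
            · have haS : a ∈ SA := hv
              obtain ⟨m, hm⟩ : ∃ m, k a = 2 * m := ⟨k a / 2, by have := htrA0 a haS; omega⟩
              show (gAssoc (fComm (pairMap k _root_.id (2 * a)))) % 2 = 0
              rw [pairMap_e, hm, fComm_e, gAssoc_1]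
              omega
            · show (gAssoc (fComm (pairMap k _root_.id (2 * b + 1)))) % 2 = 0
              rw [pairMap_o]
              show (gAssoc (fComm (2 * b + 1))) % 2 = 0
              rw [fComm_o, gAssoc_e]
              omega
          · intro v hv hvS
            rcases rep_gbin hv with ⟨a, ha, rfl⟩ | ⟨b, hb, rfl⟩
            · have haS : a ∉ SA := hvS
              obtain ⟨m, hm⟩ : ∃ m, k a = 2 * m + 1 := ⟨k a / 2, by have := htrA1 a ha haS; omega⟩
              show (gAssoc (fComm (pairMap k _root_.id (2 * a)))) % 2 = 1
              rw [pairMap_e, hm, fComm_e, gAssoc_3]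
              omega
            · exact absurd (hBfull b hb) hvS
        · -- SA proper, SB proper
          push_neg at hBfull
          obtain ⟨B1, B2, k', hacB, hisoB, htrB0, htrB1⟩ := ihB SB hSB hBne hBfull hclB
          refine ⟨fbin t A1 B1, fbin t A2 B2, fShuffle ∘ pairMap k k', ?_, ?_, ?_, ?_⟩
          · have e1 : ACEq (fbin t A B) (fbin t (fbin t A1 A2) (fbin t B1 B2)) :=
              acBinCongr hacA hacB
            exact e1.trans (acShuffle t A1 A2 B1 B2)
          · rw [trans_fbin, trans_fbin]
            exact (hisoA.pairMap_gbin hisoB).comp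
              (isoF_fShuffle t (trans A1) (trans A2) (trans B1) (trans B2))
          · intro v hv
            rcases rep_gbin (hS v hv) with ⟨a, ha, rfl⟩ | ⟨b, hb, rfl⟩
            · have haS : a ∈ SA := hv
              obtain ⟨m, hm⟩ : ∃ m, k a = 2 * m := ⟨k a / 2, by have := htrA0 a haS; omega⟩
              show (fShuffle (pairMap k k' (2 * a))) % 2 = 0
              rw [pairMap_e, hm, fShuffle_a]
              omega
            · have hbS : b ∈ SB := hv
              obtain ⟨m, hm⟩ : ∃ m, k' b = 2 * m := ⟨k' b / 2, by have := htrB0 b hbS; omega⟩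
              show (fShuffle (pairMap k k' (2 * b + 1))) % 2 = 0
              rw [pairMap_o, hm, fShuffle_c]
              omega
          · intro v hv hvS
            rcases rep_gbin hv with ⟨a, ha, rfl⟩ | ⟨b, hb, rfl⟩
            · have haS : a ∉ SA := hvS
              obtain ⟨m, hm⟩ : ∃ m, k a = 2 * m + 1 := ⟨k a / 2, by have := htrA1 a ha haS; omega⟩
              show (fShuffle (pairMap k k' (2 * a))) % 2 = 1
              rw [pairMap_e, hm, fShuffle_b]
              omega
            · have hbS : b ∉ SB := hvS
              obtain ⟨m, hm⟩ : ∃ m, k' b = 2 * m + 1 := ⟨k' b / 2, by have := htrB1 b hb hbS; omega⟩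
              show (fShuffle (pairMap k k' (2 * b + 1))) % 2 = 1
              rw [pairMap_o, hm, fShuffle_d]
              omega

lemma xsplit_contra {t : Bool} {F : Formula} (hF : ∀ A B, F ≠ fbin t A B) {S : Set ℕ}
    (hS : ∀ v ∈ S, v ∈ (trans F).verts) (hne : S.Nonempty)
    (hne' : ∃ v ∈ (trans F).verts, v ∉ S) (hcl : XClosed t (trans F) S) : False := by
  obtain ⟨u, hu⟩ := hne
  obtain ⟨v, hv, hvS⟩ := hne'
  exact hvS (hcl.reach hu (xconn_trans hF u (hS u hu) v hv))

theorem xsplit (t : Bool) (F : Formula) : ∀ S : Set ℕ,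
    (∀ v ∈ S, v ∈ (trans F).verts) → S.Nonempty →
    (∃ v ∈ (trans F).verts, v ∉ S) → XClosed t (trans F) S →
    ∃ (B' C' : Formula) (h : ℕ → ℕ), ACEq F (fbin t B' C') ∧
      IsoF h (trans F) (gbin t (trans B') (trans C')) ∧
      (∀ v ∈ S, h v % 2 = 0) ∧ (∀ v ∈ (trans F).verts, v ∉ S → h v % 2 = 1) := by
  induction F with
  | atom a =>
      intro S hS hne hne' hcl
      exact (xsplit_contra (fun A' B' h => by cases t <;> simp [fbin] at h)
        hS hne hne' hcl).elim
  | natom a =>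
      intro S hS hne hne' hcl
      exact (xsplit_contra (fun A' B' h => by cases t <;> simp [fbin] at h)
        hS hne hne' hcl).elim
  | bot =>
      intro S hS hne hne' hcl
      exact (xsplit_contra (fun A' B' h => by cases t <;> simp [fbin] at h)
        hS hne hne' hcl).elim
  | one =>
      intro S hS hne hne' hcl
      exact (xsplit_contra (fun A' B' h => by cases t <;> simp [fbin] at h)
        hS hne hne' hcl).elim
  | hole =>
      intro S hS hne hne' hcl
      exact (xsplit_contra (fun A' B' h => by cases t <;> simp [fbin] at h)
        hS hne hne' hcl).elim
  | bang A ihA =>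
      intro S hS hne hne' hcl
      exact (xsplit_contra (fun A' B' h => by cases t <;> simp [fbin] at h)
        hS hne hne' hcl).elim
  | quest A ihA =>
      intro S hS hne hne' hcl
      exact (xsplit_contra (fun A' B' h => by cases t <;> simp [fbin] at h)
        hS hne hne' hcl).elim
  | parr A B ihA ihB =>
      cases t with
      | false => exact xsplit_bin false A B ihA ihB
      | true =>
          intro S hS hne hne' hcl
          exact (xsplit_contra (fun A' B' h => by simp [fbin] at h)
            hS hne hne' hcl).elim
  | tens A B ihA ihB =>
      cases t with
      | true => exact xsplit_bin true A B ihA ihB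
      | false =>
          intro S hS hne hne' hcl
          exact (xsplit_contra (fun A' B' h => by simp [fbin] at h)
            hS hne hne' hcl).elim

/-! #### Peeling a modality -/

lemma iso_gseqpt_peel {f : ℕ → ℕ} {l l' : GLabel} {H H' : LabGraph}
    (hf : IsoF f (gseq (point l) H) (gseq (point l') H')) :
    ∃ g, IsoF g H H' := by
  have hf0 : f 0 = 0 := isRoot_gseqpt_unique (IsRoot.transport hf isRoot_gseqpt)
  obtain ⟨⟨fmap, finj, fsur⟩, fedge, flab⟩ := hf
  have key : ∀ x ∈ H.verts, f (2 * x + 1) = 2 * (f (2 * x + 1) / 2) + 1 ∧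
      f (2 * x + 1) / 2 ∈ H'.verts := by
    intro x hx
    have hm : 2 * x + 1 ∈ (gseq (point l) H).verts := odd_mem_gseqpt_iff.2 hx
    have hne : f (2 * x + 1) ≠ 0 := by
      intro h0
      have : (2 * x + 1 : ℕ) = 0 := finj (Finset.mem_coe.2 hm)
        (Finset.mem_coe.2 zero_mem_gseqpt) (by rw [h0, hf0])
      omega
    have hmem := Finset.mem_coe.1 (fmap (Finset.mem_coe.2 hm))
    rcases mem_gseqpt.1 hmem with h | ⟨h1, h2⟩
    · exact absurd h hne
    · exact ⟨by omega, h2⟩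
  refine ⟨fun x => f (2 * x + 1) / 2, ⟨?_, ?_, ?_⟩, ?_, ?_⟩
  · intro x hx
    exact Finset.mem_coe.2 (key x (Finset.mem_coe.1 hx)).2
  · intro x hx y hy heq
    have ex := (key x (Finset.mem_coe.1 hx)).1
    have ey := (key y (Finset.mem_coe.1 hy)).1
    have heq' : f (2 * x + 1) / 2 = f (2 * y + 1) / 2 := heq
    have : f (2 * x + 1) = f (2 * y + 1) := by omega
    have := finj (Finset.mem_coe.2 (odd_mem_gseqpt_iff.2 (Finset.mem_coe.1 hx)))
      (Finset.mem_coe.2 (odd_mem_gseqpt_iff.2 (Finset.mem_coe.1 hy))) this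
    omega
  · intro w hw
    have hm : 2 * w + 1 ∈ (gseq (point l') H').verts :=
      odd_mem_gseqpt_iff.2 (Finset.mem_coe.1 hw)
    obtain ⟨u, hu, hu2⟩ := fsur (Finset.mem_coe.2 hm)
    rcases mem_gseqpt.1 (Finset.mem_coe.1 hu) with rfl | ⟨h1, h2⟩
    · rw [hf0] at hu2
      exact absurd hu2 (by omega)
    · obtain ⟨x, rfl⟩ : ∃ x, u = 2 * x + 1 := ⟨u / 2, by omega⟩
      have hx : x ∈ H.verts := by
        have e : (2 * x + 1) / 2 = x := by omega
        rwa [e] at h2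
      refine ⟨x, Finset.mem_coe.2 hx, ?_⟩
      simp only [hu2]
      omega
  · intro x hx y hy
    have ex := (key x hx).1
    have ey := (key y hy).1
    have kk := fedge (2 * x + 1) (odd_mem_gseqpt_iff.2 hx) (2 * y + 1) (odd_mem_gseqpt_iff.2 hy)
    rw [ex, ey] at kk
    rw [gseqpt_R_oo, gseqpt_R_oo, gseqpt_lt_oo, gseqpt_lt_oo] at kk
    exact kk
  · intro x hx
    have ex := (key x hx).1
    have kk := flab (2 * x + 1) (odd_mem_gseqpt_iff.2 hx)
    rw [ex] at kk
    rw [gseqpt_lab_o, gseqpt_lab_o] at kk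
    exact kk

lemma not_iso_point_gbin {f : ℕ → ℕ} {l : GLabel} {t : Bool} {G H : LabGraph}
    (hG : G.verts.Nonempty) (hH : H.verts.Nonempty)
    (hf : IsoF f (point l) (gbin t G H)) : False := by
  obtain ⟨a, ha⟩ := hG
  obtain ⟨b, hb⟩ := hH
  have := iso_point_unique hf (2 * a) (mem_gbin_even_iff.2 ha) (2 * b + 1)
    (mem_gbin_odd_iff.2 hb)
  omega

lemma not_iso_point_gseqpt {f : ℕ → ℕ} {l l' : GLabel} {H : LabGraph}
    (hH : H.verts.Nonempty) (hf : IsoF f (point l) (gseq (point l') H)) : False := by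
  obtain ⟨b, hb⟩ := hH
  have := iso_point_unique hf 0 zero_mem_gseqpt (2 * b + 1) (odd_mem_gseqpt_iff.2 hb)
  omega

/-! #### Forward direction -/

theorem iso_to_aceq (F : Formula) : ∀ F' : Formula, Iso (trans F) (trans F') → ACEq F F' := by
  induction F with
  | atom a =>
      intro F' h
      obtain ⟨f, hf⟩ := iso_def.1 h
      cases F' with
      | atom b =>
          have e := iso_point_point hf
          injection e with e'
          rw [e']
          exact ACEq.refl _
      | natom b => exact absurd (iso_point_point hf) (by simp)
      | bot => exact absurd (iso_point_point hf) (by simp)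
      | one => exact absurd (iso_point_point hf) (by simp)
      | hole => exact absurd (iso_point_point hf) (by simp)
      | parr A' B' => exact (not_iso_point_gbin (t := false) (trans_verts_nonempty A')
          (trans_verts_nonempty B') hf).elim
      | tens A' B' => exact (not_iso_point_gbin (t := true) (trans_verts_nonempty A')
          (trans_verts_nonempty B') hf).elim
      | bang A' => exact (not_iso_point_gseqpt (trans_verts_nonempty A') hf).elim
      | quest A' => exact (not_iso_point_gseqpt (trans_verts_nonempty A') hf).elim
  | natom a =>
      intro F' h
      obtain ⟨f, hf⟩ := iso_def.1 h
      cases F' with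
      | natom b =>
          have e := iso_point_point hf
          injection e with e'
          rw [e']
          exact ACEq.refl _
      | atom b => exact absurd (iso_point_point hf) (by simp)
      | bot => exact absurd (iso_point_point hf) (by simp)
      | one => exact absurd (iso_point_point hf) (by simp)
      | hole => exact absurd (iso_point_point hf) (by simp)
      | parr A' B' => exact (not_iso_point_gbin (t := false) (trans_verts_nonempty A')
          (trans_verts_nonempty B') hf).elim
      | tens A' B' => exact (not_iso_point_gbin (t := true) (trans_verts_nonempty A')
          (trans_verts_nonempty B') hf).elim
      | bang A' => exact (not_iso_point_gseqpt (trans_verts_nonempty A') hf).elim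
      | quest A' => exact (not_iso_point_gseqpt (trans_verts_nonempty A') hf).elim
  | bot =>
      intro F' h
      obtain ⟨f, hf⟩ := iso_def.1 h
      cases F' with
      | bot => exact ACEq.refl _
      | atom b => exact absurd (iso_point_point hf) (by simp)
      | natom b => exact absurd (iso_point_point hf) (by simp)
      | one => exact absurd (iso_point_point hf) (by simp)
      | hole => exact absurd (iso_point_point hf) (by simp)
      | parr A' B' => exact (not_iso_point_gbin (t := false) (trans_verts_nonempty A')
          (trans_verts_nonempty B') hf).elim
      | tens A' B' => exact (not_iso_point_gbin (t := true) (trans_verts_nonempty A')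
          (trans_verts_nonempty B') hf).elim
      | bang A' => exact (not_iso_point_gseqpt (trans_verts_nonempty A') hf).elim
      | quest A' => exact (not_iso_point_gseqpt (trans_verts_nonempty A') hf).elim
  | one =>
      intro F' h
      obtain ⟨f, hf⟩ := iso_def.1 h
      cases F' with
      | one => exact ACEq.refl _
      | atom b => exact absurd (iso_point_point hf) (by simp)
      | natom b => exact absurd (iso_point_point hf) (by simp)
      | bot => exact absurd (iso_point_point hf) (by simp)
      | hole => exact absurd (iso_point_point hf) (by simp)
      | parr A' B' => exact (not_iso_point_gbin (t := false) (trans_verts_nonempty A')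
          (trans_verts_nonempty B') hf).elim
      | tens A' B' => exact (not_iso_point_gbin (t := true) (trans_verts_nonempty A')
          (trans_verts_nonempty B') hf).elim
      | bang A' => exact (not_iso_point_gseqpt (trans_verts_nonempty A') hf).elim
      | quest A' => exact (not_iso_point_gseqpt (trans_verts_nonempty A') hf).elim
  | hole =>
      intro F' h
      obtain ⟨f, hf⟩ := iso_def.1 h
      cases F' with
      | hole => exact ACEq.refl _
      | atom b => exact absurd (iso_point_point hf) (by simp)
      | natom b => exact absurd (iso_point_point hf) (by simp)
      | bot => exact absurd (iso_point_point hf) (by simp)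
      | one => exact absurd (iso_point_point hf) (by simp)
      | parr A' B' => exact (not_iso_point_gbin (t := false) (trans_verts_nonempty A')
          (trans_verts_nonempty B') hf).elim
      | tens A' B' => exact (not_iso_point_gbin (t := true) (trans_verts_nonempty A')
          (trans_verts_nonempty B') hf).elim
      | bang A' => exact (not_iso_point_gseqpt (trans_verts_nonempty A') hf).elim
      | quest A' => exact (not_iso_point_gseqpt (trans_verts_nonempty A') hf).elim
  | bang A ihA =>
      intro F' h
      obtain ⟨f, hf⟩ := iso_def.1 h
      cases F' with
      | bang A' =>
          obtain ⟨g, hg⟩ := iso_gseqpt_peel hf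
          exact ACEq.bangCongr (ihA A' ⟨g, hg⟩)
      | quest A' =>
          have hf0 : f 0 = 0 := isRoot_gseqpt_unique (IsRoot.transport hf isRoot_gseqpt)
          have hl := hf.2.2 0 zero_mem_gseqpt
          rw [hf0] at hl
          exact GLabel.noConfusion (show GLabel.quest = GLabel.bang from hl)
      | parr A' B' => exact (no_root_gbin (t := false) (trans_verts_nonempty A')
          (trans_verts_nonempty B') (IsRoot.transport hf isRoot_gseqpt)).elim
      | tens A' B' => exact (no_root_gbin (t := true) (trans_verts_nonempty A')
          (trans_verts_nonempty B') (IsRoot.transport hf isRoot_gseqpt)).elim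
      | atom b =>
          obtain ⟨g, hg⟩ := hf.symm
          exact (not_iso_point_gseqpt (trans_verts_nonempty A) hg).elim
      | natom b =>
          obtain ⟨g, hg⟩ := hf.symm
          exact (not_iso_point_gseqpt (trans_verts_nonempty A) hg).elim
      | bot =>
          obtain ⟨g, hg⟩ := hf.symm
          exact (not_iso_point_gseqpt (trans_verts_nonempty A) hg).elim
      | one =>
          obtain ⟨g, hg⟩ := hf.symm
          exact (not_iso_point_gseqpt (trans_verts_nonempty A) hg).elim
      | hole =>
          obtain ⟨g, hg⟩ := hf.symm
          exact (not_iso_point_gseqpt (trans_verts_nonempty A) hg).elim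
  | quest A ihA =>
      intro F' h
      obtain ⟨f, hf⟩ := iso_def.1 h
      cases F' with
      | quest A' =>
          obtain ⟨g, hg⟩ := iso_gseqpt_peel hf
          exact ACEq.questCongr (ihA A' ⟨g, hg⟩)
      | bang A' =>
          have hf0 : f 0 = 0 := isRoot_gseqpt_unique (IsRoot.transport hf isRoot_gseqpt)
          have hl := hf.2.2 0 zero_mem_gseqpt
          rw [hf0] at hl
          exact GLabel.noConfusion (show GLabel.bang = GLabel.quest from hl)
      | parr A' B' => exact (no_root_gbin (t := false) (trans_verts_nonempty A')
          (trans_verts_nonempty B') (IsRoot.transport hf isRoot_gseqpt)).elim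
      | tens A' B' => exact (no_root_gbin (t := true) (trans_verts_nonempty A')
          (trans_verts_nonempty B') (IsRoot.transport hf isRoot_gseqpt)).elim
      | atom b =>
          obtain ⟨g, hg⟩ := hf.symm
          exact (not_iso_point_gseqpt (trans_verts_nonempty A) hg).elim
      | natom b =>
          obtain ⟨g, hg⟩ := hf.symm
          exact (not_iso_point_gseqpt (trans_verts_nonempty A) hg).elim
      | bot =>
          obtain ⟨g, hg⟩ := hf.symm
          exact (not_iso_point_gseqpt (trans_verts_nonempty A) hg).elim
      | one =>
          obtain ⟨g, hg⟩ := hf.symm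
          exact (not_iso_point_gseqpt (trans_verts_nonempty A) hg).elim
      | hole =>
          obtain ⟨g, hg⟩ := hf.symm
          exact (not_iso_point_gseqpt (trans_verts_nonempty A) hg).elim
  | parr A B ihA ihB =>
      intro F' hIso
      obtain ⟨f, hf⟩ := iso_def.1 hIso
      have hS : ∀ v ∈ {w | ∃ a ∈ (trans A).verts, w = f (2 * a)}, v ∈ (trans F').verts := by
        rintro v ⟨a, ha, rfl⟩
        exact Finset.mem_coe.1 (hf.1.mapsTo (Finset.mem_coe.2
          ((mem_gbin_even_iff (t := false)).2 ha)))
      have hne : Set.Nonempty {w | ∃ a ∈ (trans A).verts, w = f (2 * a)} := by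
        obtain ⟨a, ha⟩ := trans_verts_nonempty A
        exact ⟨f (2 * a), a, ha, rfl⟩
      have hne' : ∃ v ∈ (trans F').verts, v ∉ {w | ∃ a ∈ (trans A).verts, w = f (2 * a)} := by
        obtain ⟨b, hb⟩ := trans_verts_nonempty B
        refine ⟨f (2 * b + 1), Finset.mem_coe.1 (hf.1.mapsTo (Finset.mem_coe.2
          ((mem_gbin_odd_iff (t := false)).2 hb))), ?_⟩
        rintro ⟨a, ha, heq⟩
        have := hf.1.injOn (Finset.mem_coe.2 ((mem_gbin_odd_iff (t := false)).2 hb))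
          (Finset.mem_coe.2 ((mem_gbin_even_iff (t := false)).2 ha)) heq
        omega
      have hcl : XClosed false (trans F') {w | ∃ a ∈ (trans A).verts, w = f (2 * a)} := by
        rintro u ⟨a, ha, rfl⟩ v hv hvS hadj
        obtain ⟨w, hw, rfl⟩ := hf.1.surjOn (Finset.mem_coe.2 hv)
        rcases rep_gbin (t := false) (Finset.mem_coe.1 hw) with ⟨c, hc, rfl⟩ | ⟨c, hc, rfl⟩
        · exact hvS ⟨c, hc, rfl⟩
        · have hadj' := (XAdj.transport (t := false) hf
            ((mem_gbin_even_iff (t := false)).2 ha) (Finset.mem_coe.1 hw)).2 hadj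
          exact xadj_cross_false (t := false) ha hc hadj'
      obtain ⟨B', C', k, hac, hiso, htr0, htr1⟩ := xsplit false F' _ hS hne hne' hcl
      have hcomp : IsoF (k ∘ f) (gbin false (trans A) (trans B))
          (gbin false (trans B') (trans C')) := hf.comp hiso
      have heven : ∀ v ∈ (gbin false (trans A) (trans B)).verts, v % 2 = 0 →
          (k ∘ f) v % 2 = 0 := by
        intro v hv hp
        rcases rep_gbin hv with ⟨a, ha, rfl⟩ | ⟨b, hb, rfl⟩
        · exact htr0 _ ⟨a, ha, rfl⟩
        · omega
      have hodd : ∀ v ∈ (gbin false (trans A) (trans B)).verts, v % 2 = 1 →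
          (k ∘ f) v % 2 = 1 := by
        intro v hv hp
        rcases rep_gbin hv with ⟨a, ha, rfl⟩ | ⟨b, hb, rfl⟩
        · omega
        · refine htr1 _ (Finset.mem_coe.1 (hf.1.mapsTo (Finset.mem_coe.2
            ((mem_gbin_odd_iff (t := false)).2 hb)))) ?_
          rintro ⟨a, ha, heq⟩
          have := hf.1.injOn (Finset.mem_coe.2 ((mem_gbin_odd_iff (t := false)).2 hb))
            (Finset.mem_coe.2 ((mem_gbin_even_iff (t := false)).2 ha)) heq
          omega
      obtain ⟨h1, h2⟩ := iso_gbin_split hcomp heven hodd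
      exact (ACEq.parrCongr (ihA B' h1) (ihB C' h2)).trans hac.symm
  | tens A B ihA ihB =>
      intro F' hIso
      obtain ⟨f, hf⟩ := iso_def.1 hIso
      have hS : ∀ v ∈ {w | ∃ a ∈ (trans A).verts, w = f (2 * a)}, v ∈ (trans F').verts := by
        rintro v ⟨a, ha, rfl⟩
        exact Finset.mem_coe.1 (hf.1.mapsTo (Finset.mem_coe.2
          ((mem_gbin_even_iff (t := true)).2 ha)))
      have hne : Set.Nonempty {w | ∃ a ∈ (trans A).verts, w = f (2 * a)} := by
        obtain ⟨a, ha⟩ := trans_verts_nonempty A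
        exact ⟨f (2 * a), a, ha, rfl⟩
      have hne' : ∃ v ∈ (trans F').verts, v ∉ {w | ∃ a ∈ (trans A).verts, w = f (2 * a)} := by
        obtain ⟨b, hb⟩ := trans_verts_nonempty B
        refine ⟨f (2 * b + 1), Finset.mem_coe.1 (hf.1.mapsTo (Finset.mem_coe.2
          ((mem_gbin_odd_iff (t := true)).2 hb))), ?_⟩
        rintro ⟨a, ha, heq⟩
        have := hf.1.injOn (Finset.mem_coe.2 ((mem_gbin_odd_iff (t := true)).2 hb))
          (Finset.mem_coe.2 ((mem_gbin_even_iff (t := true)).2 ha)) heq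
        omega
      have hcl : XClosed true (trans F') {w | ∃ a ∈ (trans A).verts, w = f (2 * a)} := by
        rintro u ⟨a, ha, rfl⟩ v hv hvS hadj
        obtain ⟨w, hw, rfl⟩ := hf.1.surjOn (Finset.mem_coe.2 hv)
        rcases rep_gbin (t := true) (Finset.mem_coe.1 hw) with ⟨c, hc, rfl⟩ | ⟨c, hc, rfl⟩
        · exact hvS ⟨c, hc, rfl⟩
        · have hadj' := (XAdj.transport (t := true) hf
            ((mem_gbin_even_iff (t := true)).2 ha) (Finset.mem_coe.1 hw)).2 hadj
          exact xadj_cross_false (t := true) ha hc hadj'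
      obtain ⟨B', C', k, hac, hiso, htr0, htr1⟩ := xsplit true F' _ hS hne hne' hcl
      have hcomp : IsoF (k ∘ f) (gbin true (trans A) (trans B))
          (gbin true (trans B') (trans C')) := hf.comp hiso
      have heven : ∀ v ∈ (gbin true (trans A) (trans B)).verts, v % 2 = 0 →
          (k ∘ f) v % 2 = 0 := by
        intro v hv hp
        rcases rep_gbin hv with ⟨a, ha, rfl⟩ | ⟨b, hb, rfl⟩
        · exact htr0 _ ⟨a, ha, rfl⟩
        · omega
      have hodd : ∀ v ∈ (gbin true (trans A) (trans B)).verts, v % 2 = 1 →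
          (k ∘ f) v % 2 = 1 := by
        intro v hv hp
        rcases rep_gbin hv with ⟨a, ha, rfl⟩ | ⟨b, hb, rfl⟩
        · omega
        · refine htr1 _ (Finset.mem_coe.1 (hf.1.mapsTo (Finset.mem_coe.2
            ((mem_gbin_odd_iff (t := true)).2 hb)))) ?_
          rintro ⟨a, ha, heq⟩
          have := hf.1.injOn (Finset.mem_coe.2 ((mem_gbin_odd_iff (t := true)).2 hb))
            (Finset.mem_coe.2 ((mem_gbin_even_iff (t := true)).2 ha)) heq
          omega
      obtain ⟨h1, h2⟩ := iso_gbin_split hcomp heven hodd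
      exact (ACEq.tensCongr (ihA B' h1) (ihB C' h2)).trans hac.symm
end LabGraph

/-- For any two formulas `F` and `F'`, their translations are isomorphic
as labeled mixed graphs iff `F` and `F'` are equivalent modulo associativity and
commutativity of tensor and par. -/
theorem trans_iso_iff_aceq (F F' : Formula) :
    LabGraph.Iso (LabGraph.trans F) (LabGraph.trans F') ↔ ACEq F F' :=
  ⟨LabGraph.iso_to_aceq F F', LabGraph.aceq_to_iso⟩
end

section
/- If a sequent Γ admits a derivation in MELL extended with the cut rule containing exactly k instances of cut, with active formula pairs (A1,Ā1), …, (Ak,Āk), then there exist natural numbers n1, …, nk such that the sequent Γ, ?^{n1}(A1⊗Ā1), …, ?^{nk}(Ak⊗Āk) is provable in MELL (without cut). -/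
lemma prov_congr {s t : Sequent} (h : ProvMELL s) (e : s = t) : ProvMELL t := e ▸ h

lemma derMap (s : Sequent) : ∀ (Δ : Sequent), ProvMELL (Δ + s) →
    ProvMELL (Δ + s.map Formula.quest) := by
  induction s using Multiset.induction with
  | empty => simp
  | cons a s ih =>
    intro Δ h
    have h1 : ProvMELL (Formula.quest a ::ₘ (Δ + s)) := by
      apply ProvMELL.der
      exact prov_congr h (by rw [Multiset.add_cons])
    have h2 := ih (Formula.quest a ::ₘ Δ)
      (prov_congr h1 (by rw [Multiset.cons_add]))
    exact prov_congr h2 (by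
      rw [Multiset.cons_add, Multiset.map_cons, Multiset.add_cons])

lemma zip_succ (L : List Formula) (ns : List ℕ) :
    List.zipWith (fun A n => Formula.questN n (Formula.tens A A.dual)) L (ns.map (· + 1))
      = (List.zipWith (fun A n => Formula.questN n (Formula.tens A A.dual)) L ns).map
          Formula.quest := by
  induction L generalizing ns with
  | nil => simp
  | cons A L ih =>
    cases ns with
    | nil => simp
    | cons n ns => simp [Formula.questN, ih]

/-- if `Γ` admits a derivation in MELL+cut whose cut instances have
exactly the active formula pairs recorded in `L = [A1, ..., Ak]`, then for some
`n1, ..., nk` the sequent `Γ, ?^n1(A1 ⊗ A1d), ..., ?^nk(Ak ⊗ Akd)` is provable in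
cut-free MELL. -/
theorem cut_to_wc (Γ : Sequent) (hΓ : Γ ≠ 0) (L : List Formula)
    (h : ProvMELLCutL Γ L) :
    ∃ ns : List ℕ, ns.length = L.length ∧
      ProvMELL (Γ + ↑(List.zipWith
        (fun A n => Formula.questN n (Formula.tens A A.dual)) L ns)) := by
  clear hΓ
  induction h with
  | ax a => exact ⟨[], rfl, by simpa using ProvMELL.ax a⟩
  | one => exact ⟨[], rfl, by simpa using ProvMELL.one⟩
  | parr Γ A B L _ ih =>
    obtain ⟨ns, hl, hp⟩ := ih
    refine ⟨ns, hl, ?_⟩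
    rw [Multiset.cons_add]
    exact ProvMELL.parr _ A B
      (prov_congr hp (by rw [Multiset.cons_add, Multiset.cons_add]))
  | bot Γ L _ ih =>
    obtain ⟨ns, hl, hp⟩ := ih
    refine ⟨ns, hl, ?_⟩
    rw [Multiset.cons_add]
    exact ProvMELL.bot _ hp
  | der Γ A L _ ih =>
    obtain ⟨ns, hl, hp⟩ := ih
    refine ⟨ns, hl, ?_⟩
    rw [Multiset.cons_add]
    exact ProvMELL.der _ A (prov_congr hp (by rw [Multiset.cons_add]))
  | weak Γ A L _ ih =>
    obtain ⟨ns, hl, hp⟩ := ih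
    refine ⟨ns, hl, ?_⟩
    rw [Multiset.cons_add]
    exact ProvMELL.weak _ A hp
  | contr Γ A L _ ih =>
    obtain ⟨ns, hl, hp⟩ := ih
    refine ⟨ns, hl, ?_⟩
    rw [Multiset.cons_add]
    exact ProvMELL.contr _ A
      (prov_congr hp (by rw [Multiset.cons_add, Multiset.cons_add]))
  | tens Γ Δ A B L₁ L₂ _ _ ih₁ ih₂ =>
    obtain ⟨ns₁, hl₁, hp₁⟩ := ih₁
    obtain ⟨ns₂, hl₂, hp₂⟩ := ih₂
    refine ⟨ns₁ ++ ns₂, by simp [hl₁, hl₂], ?_⟩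
    rw [List.zipWith_append hl₁.symm]
    have h3 := ProvMELL.tens _ _ A B
      (prov_congr hp₁ (by rw [Multiset.cons_add]))
      (prov_congr hp₂ (by rw [Multiset.cons_add]))
    refine prov_congr h3 ?_
    rw [← Multiset.coe_add, Multiset.cons_add]
    congr 1
    abel
  | prom Γ A L _ ih =>
    obtain ⟨ns, hl, hp⟩ := ih
    refine ⟨ns.map (· + 1), by simp [hl], ?_⟩
    rw [zip_succ]
    have h1 := derMap _ _ hp
    have h2 : ProvMELL (A ::ₘ (Γ + ↑(List.zipWith
        (fun A n => Formula.questN n (Formula.tens A A.dual)) L ns)).map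
        Formula.quest) :=
      prov_congr h1 (by rw [Multiset.cons_add, Multiset.map_add])
    refine prov_congr (ProvMELL.prom _ A h2) ?_
    rw [Multiset.map_add, Multiset.map_coe, Multiset.cons_add]
  | cut Γ Δ A L₁ L₂ _ _ _ ih₁ ih₂ =>
    obtain ⟨ns₁, hl₁, hp₁⟩ := ih₁
    obtain ⟨ns₂, hl₂, hp₂⟩ := ih₂
    refine ⟨0 :: (ns₁ ++ ns₂), by simp [hl₁, hl₂], ?_⟩
    rw [List.zipWith_cons_cons, List.zipWith_append hl₁.symm]
    have h3 := ProvMELL.tens _ _ A A.dual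
      (prov_congr hp₁ (by rw [Multiset.cons_add]))
      (prov_congr hp₂ (by rw [Multiset.cons_add]))
    refine prov_congr h3 ?_
    simp only [Formula.questN, ← Multiset.cons_coe, ← Multiset.coe_add,
      Multiset.add_cons]
    congr 1
    abel
end
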